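/- arXiv:1302.4214 — 5 statements merged into one kernel-verified Lean document; each statement's English description precedes it below -/
import Mathlib

section
/- For every d-regular graph G, we have f(G) ≤ b(G), where f(G) is the f-chromatic vertex number of G. -/
open SimpleGraph

variable {V : Type*} [Fintype V] [DecidableEq V]

/-- In a proper coloring `c` with `k` colors, a vertex is dominant if it has a
neighbor in every color class other than its own. -/
def IsDominant {k : ℕ} (G : SimpleGraph V) (c : V → Fin k) (v : V) : Prop :=
  ∀ j : Fin k, j ≠ c v → ∃ u, G.Adj v u ∧ c u = j

/-- `c` is a proper coloring. -/
def ProperColoring {k : ℕ} (G : SimpleGraph V) (c : V → Fin k) : Prop :=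
  ∀ u v, G.Adj u v → c u ≠ c v

/-- A b-coloring: proper, and every color class contains a dominant vertex. -/
def IsBColoring {k : ℕ} (G : SimpleGraph V) (c : V → Fin k) : Prop :=
  ProperColoring G c ∧ ∀ j : Fin k, ∃ v, c v = j ∧ IsDominant G c v

/-- The b-chromatic number: largest `k` admitting a b-coloring with `k` colors. -/
noncomputable def bNum (G : SimpleGraph V) : ℕ :=
  sSup {k | ∃ c : V → Fin k, IsBColoring G c}

/-- Number of colors possessing a dominant vertex in the coloring `c`. -/
noncomputable def domColors {k : ℕ} (G : SimpleGraph V) (c : V → Fin k) : ℕ :=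
  Nat.card {j : Fin k // ∃ v, c v = j ∧ IsDominant G c v}

/-- The f-chromatic vertex number of a d-regular graph: the maximum number of
colors having a dominant vertex, over proper (d+1)-colorings. -/
noncomputable def fNum (G : SimpleGraph V) (d : ℕ) : ℕ :=
  sSup {m | ∃ c : V → Fin (d+1), ProperColoring G c ∧ m = domColors G c}

/-- `G` contains no cycle of length `n`. -/
def NoCycleOfLength (G : SimpleGraph V) (n : ℕ) : Prop :=
  ∀ (v : V) (w : G.Walk v v), w.IsCycle → w.length ≠ n

/-- `⌈n/2⌉` for a natural number `n`. -/
def ceilHalf (n : ℕ) : ℕ := (n + 1) / 2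

open scoped Classical

/-- Dominance relative to a set `T` of active colors. -/
def DomRel {k : ℕ} (G : SimpleGraph V) (T : Finset (Fin k)) (c : V → Fin k) (v : V) : Prop :=
  ∀ j ∈ T, j ≠ c v → ∃ u, G.Adj v u ∧ c u = j

lemma build {k : ℕ} (G : SimpleGraph V) (T : Finset (Fin k)) (c : V → Fin k)
    (hrange : ∀ v, c v ∈ T) (hprop : ProperColoring G c)
    (hall : ∀ j ∈ T, ∃ v, c v = j ∧ DomRel G T c v) :
    ∃ c' : V → Fin T.card, IsBColoring G c' := by
  classical
  let e : {x // x ∈ T} ≃ Fin T.card := T.equivFin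
  refine ⟨fun v => e ⟨c v, hrange v⟩, ?_, ?_⟩
  · intro u v huv h
    exact hprop u v huv (congrArg Subtype.val (e.injective h))
  · intro j'
    obtain ⟨v, hv, hdomv⟩ := hall (e.symm j').1 (e.symm j').2
    have hcv : (⟨c v, hrange v⟩ : {x // x ∈ T}) = e.symm j' := Subtype.ext hv
    refine ⟨v, ?_, ?_⟩
    · show e ⟨c v, hrange v⟩ = j'
      rw [hcv, e.apply_symm_apply]
    intro i hi
    have hne : (e.symm i).1 ≠ c v := by
      intro h
      apply hi
      show i = e ⟨c v, hrange v⟩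
      rw [show (⟨c v, hrange v⟩ : {x // x ∈ T}) = e.symm i from (Subtype.ext h).symm,
        e.apply_symm_apply]
    obtain ⟨u, hu, hcu⟩ := hdomv (e.symm i).1 (e.symm i).2 hne
    refine ⟨u, hu, ?_⟩
    show e ⟨c u, hrange u⟩ = i
    rw [show (⟨c u, hrange u⟩ : {x // x ∈ T}) = e.symm i from Subtype.ext hcu, e.apply_symm_apply]

lemma key {k : ℕ} (G : SimpleGraph V) :
    ∀ (n : ℕ) (T : Finset (Fin k)) (c : V → Fin k),
    T.card ≤ n → (∀ v, c v ∈ T) → ProperColoring G c →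
    ∃ (m : ℕ) (c' : V → Fin m), IsBColoring G c' ∧
      (T.filter (fun j => ∃ v, c v = j ∧ DomRel G T c v)).card ≤ m := by
  intro n
  induction n with
  | zero =>
    intro T c hcard hrange hprop
    have hT : T = ∅ := Finset.card_eq_zero.mp (Nat.le_zero.mp hcard)
    obtain ⟨c', hc'⟩ := build G T c hrange hprop (by intro j hj; rw [hT] at hj; simp at hj)
    exact ⟨T.card, c', hc', Finset.card_filter_le _ _⟩
  | succ n ih =>
    intro T c hcard hrange hprop
    by_cases hall : ∀ j ∈ T, ∃ v, c v = j ∧ DomRel G T c v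
    · obtain ⟨c', hc'⟩ := build G T c hrange hprop hall
      exact ⟨T.card, c', hc', Finset.card_filter_le _ _⟩
    · push_neg at hall
      obtain ⟨j, hjT, hbad⟩ := hall
      -- every vertex colored j misses some color of T in its neighborhood
      have hex : ∀ v, c v = j → ∃ j', j' ∈ T ∧ j' ≠ j ∧ ∀ u, G.Adj v u → c u ≠ j' := by
        intro v hv
        have h1 : ¬ DomRel G T c v := fun h => hbad v hv h
        rw [DomRel] at h1
        push_neg at h1
        obtain ⟨j', hj'T, hj'ne, h2⟩ := h1
        exact ⟨j', hj'T, hv ▸ hj'ne, fun u hu hcu => (h2 u hu hcu).elim⟩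
      let c'' : V → Fin k := fun v => if h : c v = j then (hex v h).choose else c v
      have hc''_eq : ∀ v, c v ≠ j → c'' v = c v := fun v h => dif_neg h
      have hc''_j : ∀ v (h : c v = j), c'' v = (hex v h).choose := fun v h => dif_pos h
      have hrange'' : ∀ v, c'' v ∈ T.erase j := by
        intro v
        by_cases h : c v = j
        · rw [hc''_j v h]
          exact Finset.mem_erase.mpr ⟨(hex v h).choose_spec.2.1, (hex v h).choose_spec.1⟩
        · rw [hc''_eq v h]
          exact Finset.mem_erase.mpr ⟨h, hrange v⟩
      have hprop'' : ProperColoring G c'' := by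
        intro u v huv
        by_cases hu : c u = j <;> by_cases hv : c v = j
        · exact absurd (hu.trans hv.symm) (hprop u v huv)
        · rw [hc''_j u hu, hc''_eq v hv]
          exact fun h => (hex u hu).choose_spec.2.2 v huv h.symm
        · rw [hc''_eq u hu, hc''_j v hv]
          exact fun h => (hex v hv).choose_spec.2.2 u huv.symm h
        · rw [hc''_eq u hu, hc''_eq v hv]; exact hprop u v huv
      have hsub : T.filter (fun i => ∃ v, c v = i ∧ DomRel G T c v) ⊆
          (T.erase j).filter (fun i => ∃ v, c'' v = i ∧ DomRel G (T.erase j) c'' v) := by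
        intro i hi
        rw [Finset.mem_filter] at hi
        obtain ⟨hiT, v, hv, hdomv⟩ := hi
        have hij : i ≠ j := by rintro rfl; exact hbad v hv hdomv
        have hcvj : c v ≠ j := fun h => hij (hv ▸ h ▸ rfl)
        rw [Finset.mem_filter]
        refine ⟨Finset.mem_erase.mpr ⟨hij, hiT⟩, v, by rw [hc''_eq v hcvj, hv], ?_⟩
        intro j'' hj'' hne
        obtain ⟨hj''j, hj''T⟩ := Finset.mem_erase.mp hj''
        have hne' : j'' ≠ c v := by rwa [hc''_eq v hcvj] at hne
        obtain ⟨u, hu, hcu⟩ := hdomv j'' hj''T hne'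
        exact ⟨u, hu, by rw [hc''_eq u (hcu ▸ hj''j), hcu]⟩
      have hcard' : (T.erase j).card ≤ n := by
        have := Finset.card_erase_of_mem hjT
        omega
      obtain ⟨m, c', hb, hle⟩ := ih (T.erase j) c'' hcard' hrange'' hprop''
      exact ⟨m, c', hb, le_trans (Finset.card_le_card hsub) hle⟩

theorem fNum_le_bNum (G : SimpleGraph V) (d : ℕ)
    [DecidableRel G.Adj] (hreg : G.IsRegularOfDegree d) :
    fNum G d ≤ bNum G := by
  classical
  apply csSup_le'
  rintro m ⟨c, hprop, rfl⟩
  obtain ⟨m', c', hb, hle⟩ := key G (d+1) (Finset.univ : Finset (Fin (d+1))) c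
    (by simp) (fun v => Finset.mem_univ _) hprop
  have hdc : domColors G c ≤ m' := by
    refine le_trans (le_of_eq ?_) hle
    rw [domColors, Nat.card_eq_fintype_card, Fintype.card_subtype]
    congr 1
    apply Finset.filter_congr
    intro j _
    simp only [DomRel, IsDominant, Finset.mem_univ, true_implies]
  have hbdd : BddAbove {k | ∃ c : V → Fin k, IsBColoring G c} := by
    refine ⟨Fintype.card V, ?_⟩
    rintro k ⟨c, hc⟩
    have hinj : Function.Injective (fun j : Fin k => (hc.2 j).choose) := by
      intro a b h
      have ha := (hc.2 a).choose_spec.1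
      have hb' := (hc.2 b).choose_spec.1
      rw [← ha, ← hb']
      exact congrArg c h
    simpa using Fintype.card_le_of_injective _ hinj
  exact hdc.trans (le_csSup hbdd ⟨c', hb⟩)
end

section
/- For every d-regular graph G, a proper coloring of G with d+1 colors in which every color class contains a dominant vertex exists if and only if f(G) = d + 1; in particular, if f(G) = d + 1 then b(G) = d + 1. -/
open SimpleGraph

variable {V : Type*} [Fintype V] [DecidableEq V]

lemma domColors_le {k : ℕ} (G : SimpleGraph V) (c : V → Fin k) :
    domColors G c ≤ k := by
  classical
  calc Nat.card {j : Fin k // ∃ v, c v = j ∧ IsDominant G c v}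
      ≤ Nat.card (Fin k) :=
        Nat.card_le_card_of_injective Subtype.val Subtype.val_injective
    _ = k := by simp

lemma domColors_of_bColoring {k : ℕ} (G : SimpleGraph V) (c : V → Fin k)
    (hb : IsBColoring G c) : domColors G c = k := by
  classical
  have : Nat.card {j : Fin k // ∃ v, c v = j ∧ IsDominant G c v}
      = Nat.card (Fin k) :=
    Nat.card_congr (Equiv.subtypeUnivEquiv hb.2)
  simpa [domColors] using this

lemma bColoring_of_domColors {k : ℕ} (G : SimpleGraph V) (c : V → Fin k)
    (hp : ProperColoring G c) (hd : domColors G c = k) : IsBColoring G c := by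
  classical
  refine ⟨hp, ?_⟩
  have hcard : Fintype.card {j : Fin k // ∃ v, c v = j ∧ IsDominant G c v}
      = Fintype.card (Fin k) := by
    rw [← Nat.card_eq_fintype_card, ← Nat.card_eq_fintype_card]
    simpa [domColors] using hd
  have hsurj : Function.Surjective
      (Subtype.val : {j : Fin k // ∃ v, c v = j ∧ IsDominant G c v} → Fin k) :=
    ((Fintype.bijective_iff_injective_and_card _).2
      ⟨Subtype.val_injective, hcard⟩).2
  intro j
  obtain ⟨⟨j', hj'⟩, rfl⟩ := hsurj j
  exact hj'

lemma bColoring_k_le (G : SimpleGraph V) (d : ℕ) [DecidableRel G.Adj]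
    (hreg : G.IsRegularOfDegree d) {k : ℕ} (hk : 0 < k)
    (c : V → Fin k) (hb : IsBColoring G c) : k ≤ d + 1 := by
  classical
  obtain ⟨v, hv, hdom⟩ := hb.2 ⟨0, hk⟩
  set s : Finset V := insert v (G.neighborFinset v) with hs
  have hg : ∀ j : Fin k, ∃ u ∈ s, c u = j := by
    intro j
    by_cases h : j = c v
    · exact ⟨v, Finset.mem_insert_self _ _, h.symm⟩
    · obtain ⟨u, hadj, hcu⟩ := hdom j h
      exact ⟨u, Finset.mem_insert_of_mem (by rwa [G.mem_neighborFinset]), hcu⟩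
  choose g hgs hgc using hg
  have hinj : Function.Injective g := fun a b h => by
    rw [← hgc a, ← hgc b, h]
  have h1 : Fintype.card (Fin k) ≤ s.card := by
    have := Finset.card_le_card_of_injOn (s := Finset.univ) g
      (fun a _ => hgs a) hinj.injOn
    simpa using this
  have h2 : s.card ≤ d + 1 := by
    calc s.card ≤ (G.neighborFinset v).card + 1 := Finset.card_insert_le _ _
      _ = d + 1 := by rw [G.card_neighborFinset_eq_degree, hreg v]
  simpa using h1.trans h2

theorem bColoring_iff_fNum_eq (G : SimpleGraph V) (d : ℕ) [DecidableRel G.Adj]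
    (hreg : G.IsRegularOfDegree d) :
    ((∃ c : V → Fin (d + 1), IsBColoring G c) ↔ fNum G d = d + 1) ∧
      (fNum G d = d + 1 → bNum G = d + 1) := by
  classical
  set S : Set ℕ :=
    {m | ∃ c : V → Fin (d+1), ProperColoring G c ∧ m = domColors G c} with hS
  have hSbound : ∀ m ∈ S, m ≤ d + 1 := by
    rintro m ⟨c, hc, rfl⟩
    exact domColors_le G c
  have hSbdd : BddAbove S := ⟨d + 1, fun m hm => hSbound m hm⟩
  have hfwd : (∃ c : V → Fin (d + 1), IsBColoring G c) → fNum G d = d + 1 := by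
    rintro ⟨c, hc⟩
    have hmem : d + 1 ∈ S := ⟨c, hc.1, (domColors_of_bColoring G c hc).symm⟩
    refine le_antisymm (csSup_le ⟨_, hmem⟩ hSbound) (le_csSup hSbdd hmem)
  have hbwd : fNum G d = d + 1 → ∃ c : V → Fin (d + 1), IsBColoring G c := by
    intro hf
    have hne : S.Nonempty := by
      by_contra h
      rw [Set.not_nonempty_iff_eq_empty] at h
      rw [fNum, ← hS, h] at hf
      simp at hf
    have hmem : sSup S ∈ S := Nat.sSup_mem hne hSbdd
    rw [show sSup S = fNum G d from rfl, hf] at hmem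
    obtain ⟨c, hp, hd⟩ := hmem
    exact ⟨c, bColoring_of_domColors G c hp hd.symm⟩
  refine ⟨⟨hfwd, hbwd⟩, ?_⟩
  intro hf
  obtain ⟨c, hc⟩ := hbwd hf
  have hmem : d + 1 ∈ {k | ∃ c : V → Fin k, IsBColoring G c} := ⟨c, hc⟩
  have hbound : ∀ k ∈ {k | ∃ c : V → Fin k, IsBColoring G c}, k ≤ d + 1 := by
    rintro k ⟨c', hc'⟩
    rcases Nat.eq_zero_or_pos k with rfl | hk
    · exact Nat.zero_le _
    · exact bColoring_k_le G d hreg hk c' hc'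
  exact le_antisymm (csSup_le ⟨_, hmem⟩ hbound)
    (le_csSup ⟨d + 1, fun k hk => hbound k hk⟩ hmem)
end

section
/- If G is a d-regular graph with d ≥ 7 containing neither a cycle of length 4 nor a cycle of length 6, then the b-chromatic number of G equals d + 1. -/
open SimpleGraph

variable {V : Type*} [Fintype V] [DecidableEq V]

set_option linter.unusedSectionVars false
set_option maxHeartbeats 1000000

open Finset


lemma exists_good_bijection {α β : Type*} [DecidableEq α] [DecidableEq β] [Nonempty β]
    (X : Finset α) (Y : Finset β) (hcard : Y.card = X.card)
    (forb : α → Finset β) (hforb : ∀ x ∈ X, (forb x).card ≤ 1)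
    (hall : ∀ y ∈ Y, ∃ x ∈ X, y ∉ forb x) :
    ∃ σ : α → β, Set.InjOn σ X ∧ (∀ x ∈ X, σ x ∈ Y ∧ σ x ∉ forb x) ∧
      (∀ y ∈ Y, ∃ x ∈ X, σ x = y) := by
  classical
  have hHall : ∀ s : Finset ↥X, s.card ≤ (s.biUnion (fun x => Y \ forb ↑x)).card := by
    intro s
    rcases s.eq_empty_or_nonempty with rfl | ⟨x0, hx0⟩
    · simp
    by_cases hs : s.card < X.card
    · calc s.card ≤ X.card - 1 := by omega
        _ ≤ (Y \ forb ↑x0).card := by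
            have h1 : (forb ↑x0).card ≤ 1 := hforb _ x0.2
            have := Finset.card_sdiff_add_card_inter Y (forb (↑x0 : α))
            have h2 : (Y ∩ forb ↑x0).card ≤ 1 := le_trans (card_le_card inter_subset_right) h1
            omega
        _ ≤ _ := card_le_card (subset_biUnion_of_mem (s := s) (fun (x : ↥X) => Y \ forb (↑x : α)) hx0)
    · have hsX : s.card = X.card := by
        have := s.card_le_univ
        simp [Fintype.card_coe] at this
        omega
      have hsuniv : s = univ := by
        apply Finset.eq_univ_of_card
        simpa [Fintype.card_coe] using hsX
      have hY : Y ⊆ s.biUnion (fun x => Y \ forb ↑x) := by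
        intro y hy
        obtain ⟨x, hxX, hxy⟩ := hall y hy
        exact mem_biUnion.2 ⟨⟨x, hxX⟩, by simp [hsuniv], by simp [hy, hxy]⟩
      calc s.card = Y.card := by rw [hsX, hcard]
        _ ≤ _ := card_le_card hY
  obtain ⟨f, hfinj, hfmem⟩ := (Finset.all_card_le_biUnion_card_iff_exists_injective _).1 hHall
  set σ : α → β := fun a => if h : a ∈ X then f ⟨a, h⟩ else Classical.arbitrary β with hσ
  have hσX : ∀ a (h : a ∈ X), σ a = f ⟨a, h⟩ := by intro a h; simp [hσ, h]
  have hinj : Set.InjOn σ X := by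
    intro a ha b hb hab
    rw [hσX a ha, hσX b hb] at hab
    exact Subtype.ext_iff.1 (hfinj hab)
  have hmem : ∀ x ∈ X, σ x ∈ Y ∧ σ x ∉ forb x := by
    intro x hx
    have := hfmem ⟨x, hx⟩
    rw [← hσX x hx] at this
    simpa using this
  refine ⟨σ, hinj, hmem, ?_⟩
  have himg : X.image σ = Y := by
    apply Finset.eq_of_subset_of_card_le
    · intro y hy
      obtain ⟨x, hx, rfl⟩ := mem_image.1 hy
      exact (hmem x hx).1
    · rw [Finset.card_image_of_injOn hinj, hcard]
  intro y hy
  rw [← himg] at hy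
  obtain ⟨x, hx, rfl⟩ := mem_image.1 hy
  exact ⟨x, hx, rfl⟩

lemma exists_not_mem_of_lt {β : Type*} [Fintype β] [DecidableEq β] (s : Finset β)
    (h : s.card < Fintype.card β) : ∃ y, y ∉ s := by
  by_contra hc
  push_neg at hc
  have : s = univ := eq_univ_iff_forall.2 hc
  rw [this, card_univ] at h
  omega

lemma extend_coloring (G : SimpleGraph V) [DecidableRel G.Adj] (d : ℕ)
    (hreg : G.IsRegularOfDegree d) :
    ∀ (T : Finset V) (c : V → Fin (d+1)),
      (∀ x y, x ∉ T → y ∉ T → G.Adj x y → c x ≠ c y) →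
      ∃ c', (∀ x ∉ T, c' x = c x) ∧ ProperColoring G c' := by
  classical
  intro T
  induction T using Finset.induction_on with
  | empty =>
    intro c hc
    exact ⟨c, fun x _ => rfl, fun x y hxy => hc x y (by simp) (by simp) hxy⟩
  | @insert a s ha IH =>
    intro c hc
    have hcardlt : ((G.neighborFinset a \ insert a s).image c).card < Fintype.card (Fin (d+1)) := by
      have h1 : ((G.neighborFinset a \ insert a s).image c).card ≤ (G.neighborFinset a).card :=
        le_trans card_image_le (card_le_card sdiff_subset)
      rw [G.card_neighborFinset_eq_degree a, hreg a] at h1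
      simpa using Nat.lt_succ_of_le h1
    obtain ⟨y, hy⟩ := exists_not_mem_of_lt _ hcardlt
    set c₁ := Function.update c a y with hc₁
    have hupd : ∀ x, x ≠ a → c₁ x = c x := fun x hx => Function.update_of_ne hx _ _
    have hc₁a : c₁ a = y := Function.update_self _ _ _
    have hproper : ∀ x z, x ∉ s → z ∉ s → G.Adj x z → c₁ x ≠ c₁ z := by
      intro x z hx hz hxz
      by_cases hxa : x = a
      · subst hxa
        have hza : z ≠ x := hxz.ne'
        rw [hc₁a, hupd z hza]
        intro heq
        apply hy
        exact mem_image.2 ⟨z, by simp [mem_sdiff, mem_neighborFinset, hxz, hza, hz], heq.symm⟩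
      · by_cases hza : z = a
        · subst hza
          rw [hc₁a, hupd x hxa]
          intro heq
          apply hy
          exact mem_image.2 ⟨x, by simp [mem_sdiff, mem_neighborFinset, hxz.symm, hxa, hx], heq⟩
        · rw [hupd x hxa, hupd z hza]
          exact hc x z (by simp [hxa, hx]) (by simp [hza, hz]) hxz
    obtain ⟨c', hc'eq, hc'prop⟩ := IH c₁ hproper
    refine ⟨c', ?_, hc'prop⟩
    intro x hx
    have hxa : x ≠ a := fun h => hx (h ▸ mem_insert_self a s)
    have hxs : x ∉ s := fun h => hx (mem_insert_of_mem h)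
    rw [hc'eq x hxs, hupd x hxa]


namespace BC
open Finset

lemma no_C4 {G : SimpleGraph V} (h4 : NoCycleOfLength G 4) {a b c e : V}
    (h1 : G.Adj a b) (h2 : G.Adj b c) (h3 : G.Adj c e) (h5 : G.Adj e a)
    (hac : a ≠ c) (hbe : b ≠ e) : False := by
  refine h4 a (.cons h1 (.cons h2 (.cons h3 (.cons h5 .nil)))) ?_ rfl
  simp [Walk.isCycle_def, Walk.isTrail_def, List.Nodup, h1.ne, h1.ne', h2.ne, h2.ne',
    h3.ne, h3.ne', h5.ne, h5.ne', hac, hac.symm, hbe, hbe.symm]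

lemma no_C6 {G : SimpleGraph V} (h6 : NoCycleOfLength G 6) {a b c e f g : V}
    (h1 : G.Adj a b) (h2 : G.Adj b c) (h3 : G.Adj c e) (h4 : G.Adj e f)
    (h5 : G.Adj f g) (h7 : G.Adj g a)
    (hac : a ≠ c) (hae : a ≠ e) (haf : a ≠ f) (hbe : b ≠ e) (hbf : b ≠ f)
    (hbg : b ≠ g) (hcf : c ≠ f) (hcg : c ≠ g) (heg : e ≠ g) : False := by
  refine h6 a (.cons h1 (.cons h2 (.cons h3 (.cons h4 (.cons h5 (.cons h7 .nil)))))) ?_ rfl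
  simp [Walk.isCycle_def, Walk.isTrail_def, List.Nodup, h1.ne, h1.ne', h2.ne, h2.ne',
    h3.ne, h3.ne', h4.ne, h4.ne', h5.ne, h5.ne', h7.ne, h7.ne', hac, hac.symm, hae, hae.symm,
    haf, haf.symm, hbe, hbe.symm, hbf, hbf.symm, hbg, hbg.symm, hcf, hcf.symm, hcg, hcg.symm,
    heg, heg.symm]

variable {G : SimpleGraph V} [DecidableRel G.Adj] {d : ℕ} {v0 : V} {u : Fin d → V}

structure Ctx (G : SimpleGraph V) [DecidableRel G.Adj] (d : ℕ) (v0 : V) (u : Fin d → V) : Prop where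
  hd : 7 ≤ d
  hreg : G.IsRegularOfDegree d
  h4 : NoCycleOfLength G 4
  h6 : NoCycleOfLength G 6
  huinj : Function.Injective u
  huadj : ∀ i, G.Adj v0 (u i)
  husurj : ∀ x, G.Adj v0 x → ∃ i, u i = x

/-- the punctured neighborhood of `u i`. -/
def Bs (G : SimpleGraph V) [DecidableRel G.Adj] (u : Fin d → V) (v0 : V) (i : Fin d) :
    Finset V := (G.neighborFinset (u i)).erase v0

def uS (u : Fin d → V) : Finset V := Finset.univ.image u

lemma mem_Bs {i : Fin d} {w : V} : w ∈ Bs G u v0 i ↔ w ≠ v0 ∧ G.Adj (u i) w := by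
  simp [Bs, mem_erase, mem_neighborFinset]

lemma mem_uS {w : V} : w ∈ uS u ↔ ∃ k, u k = w := by simp [uS]

lemma card_Bs (hc : Ctx G d v0 u) (i : Fin d) : (Bs G u v0 i).card = d - 1 := by
  rw [Bs, card_erase_of_mem (by rw [mem_neighborFinset]; exact (hc.huadj i).symm)]
  rw [G.card_neighborFinset_eq_degree, hc.hreg (u i)]

lemma v0_not_mem_Bs {i : Fin d} : v0 ∉ Bs G u v0 i := by simp [mem_Bs]

lemma ui_ne_v0 (hc : Ctx G d v0 u) (i : Fin d) : u i ≠ v0 := (hc.huadj i).ne'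

lemma Bs_disjoint (hc : Ctx G d v0 u) {i j : Fin d} (hij : i ≠ j) {w : V}
    (hwi : w ∈ Bs G u v0 i) (hwj : w ∈ Bs G u v0 j) : False := by
  rw [mem_Bs] at hwi hwj
  exact no_C4 hc.h4 (hc.huadj i) hwi.2 hwj.2.symm (hc.huadj j).symm
    hwi.1.symm (fun h => hij (hc.huinj h))

/-- there is at most one `u l` inside each `Bs i`. -/
lemma forced_unique (hc : Ctx G d v0 u) {i k l : Fin d} (hk : u k ∈ Bs G u v0 i)
    (hl : u l ∈ Bs G u v0 i) (hkl : k ≠ l) : False := by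
  rw [mem_Bs] at hk hl
  exact no_C4 hc.h4 hk.2.symm hl.2 (hc.huadj l).symm (hc.huadj k)
    (fun h => hkl (hc.huinj h)) (ui_ne_v0 hc i)

lemma adj_u_mem (hc : Ctx G d v0 u) {j k : Fin d} {w : V} (hw : w ∈ Bs G u v0 j)
    (hadj : G.Adj w (u k)) : k = j := by
  by_contra hne
  have : w ∈ Bs G u v0 k := mem_Bs.2 ⟨(mem_Bs.1 hw).1, hadj.symm⟩
  exact Bs_disjoint hc (Ne.symm hne) hw this

lemma not_adj_v0 (hc : Ctx G d v0 u) {j : Fin d} {w : V} (hw : w ∈ Bs G u v0 j)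
    (hwu : w ∉ uS u) (hadj : G.Adj v0 w) : False := by
  obtain ⟨k, rfl⟩ := hc.husurj w hadj
  exact hwu (mem_uS.2 ⟨k, rfl⟩)

/-- F3 : at most one edge between two punctured neighbourhoods (off `uS`). -/
lemma cross_pair_unique (hc : Ctx G d v0 u) {i j : Fin d} (hij : i ≠ j)
    {w1 w2 w1' w2' : V} (h1 : w1 ∈ Bs G u v0 i) (h1u : w1 ∉ uS u)
    (h2 : w2 ∈ Bs G u v0 i) (h2u : w2 ∉ uS u)
    (h1' : w1' ∈ Bs G u v0 j) (h1u' : w1' ∉ uS u)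
    (h2' : w2' ∈ Bs G u v0 j) (h2u' : w2' ∉ uS u)
    (e1 : G.Adj w1 w1') (e2 : G.Adj w2 w2') : w1 = w2 ∧ w1' = w2' := by
  by_cases hw : w1 = w2
  · subst hw
    refine ⟨rfl, ?_⟩
    by_contra hne
    exact no_C4 hc.h4 e1.symm e2 ((mem_Bs.1 h2').2).symm (mem_Bs.1 h1').2
      hne (fun h => h1u (mem_uS.2 ⟨j, h.symm⟩))
  · exfalso
    by_cases hw' : w1' = w2'
    · subst hw'
      exact no_C4 hc.h4 e1 e2.symm ((mem_Bs.1 h2).2).symm (mem_Bs.1 h1).2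
        hw (fun h => h1u' (mem_uS.2 ⟨i, h.symm⟩))
    · -- C6 : u i, w1, w1', u j, w2', w2
      refine no_C6 hc.h6 (mem_Bs.1 h1).2 e1 ((mem_Bs.1 h1').2).symm (mem_Bs.1 h2').2 e2.symm
        ((mem_Bs.1 h2).2).symm ?_ ?_ ?_ ?_ ?_ ?_ ?_ ?_ ?_
      · exact fun h => h1u' (mem_uS.2 ⟨i, h⟩)
      · exact fun h => hij (hc.huinj h)
      · exact fun h => h2u' (mem_uS.2 ⟨i, h⟩)
      · exact fun h => h1u (mem_uS.2 ⟨j, h.symm⟩)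
      · exact fun h => Bs_disjoint hc hij h1 (by rw [h]; exact h2')
      · exact hw
      · exact hw'
      · exact fun h => Bs_disjoint hc hij h2 (by rw [← h]; exact h1')
      · exact fun h => h2u (mem_uS.2 ⟨j, h⟩)

/-- F4 : each vertex has at most one cross neighbour. -/
lemma cross_vertex_unique (hc : Ctx G d v0 u) {i j k : Fin d} (hji : j ≠ i) (hki : k ≠ i)
    {w w' w'' : V} (hw : w ∈ Bs G u v0 i) (hwu : w ∉ uS u)
    (hw' : w' ∈ Bs G u v0 j) (hwu' : w' ∉ uS u)
    (hw'' : w'' ∈ Bs G u v0 k) (hwu'' : w'' ∉ uS u)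
    (e1 : G.Adj w w') (e2 : G.Adj w w'') : j = k ∧ w' = w'' := by
  by_cases hjk : j = k
  · subst hjk
    refine ⟨rfl, ?_⟩
    by_contra hne
    exact no_C4 hc.h4 e1.symm e2 ((mem_Bs.1 hw'').2).symm (mem_Bs.1 hw').2
      hne (fun h => hwu (mem_uS.2 ⟨j, h.symm⟩))
  · exfalso
    -- C6 : v0, u j, w', w, w'', u k
    refine no_C6 hc.h6 (hc.huadj j) (mem_Bs.1 hw').2 e1.symm e2 ((mem_Bs.1 hw'').2).symm
      (hc.huadj k).symm ?_ ?_ ?_ ?_ ?_ ?_ ?_ ?_ ?_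
    · exact fun h => (mem_Bs.1 hw').1 h.symm
    · exact fun h => (mem_Bs.1 hw).1 h.symm
    · exact fun h => (mem_Bs.1 hw'').1 h.symm
    · exact fun h => hwu (mem_uS.2 ⟨j, h⟩)
    · exact fun h => hwu'' (mem_uS.2 ⟨j, h⟩)
    · exact fun h => hjk (hc.huinj h)
    · exact fun h => Bs_disjoint hc hjk hw' (by rw [h]; exact hw'')
    · exact fun h => hwu' (mem_uS.2 ⟨k, h.symm⟩)
    · exact fun h => hwu (mem_uS.2 ⟨k, h.symm⟩)

end BC


namespace BC
open Finset SimpleGraph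

variable {V : Type*} [Fintype V] [DecidableEq V]
variable {G : SimpleGraph V} [DecidableRel G.Adj] {d : ℕ} {v0 : V} {u : Fin d → V}

def Aset (G : SimpleGraph V) [DecidableRel G.Adj] (u : Fin d → V) (v0 : V) (i : Fin d) :
    Finset V := Bs G u v0 i \ uS u

def Aprev (G : SimpleGraph V) [DecidableRel G.Adj] (u : Fin d → V) (v0 : V) (i : ℕ) :
    Finset V :=
  (Finset.univ.filter (fun j : Fin d => (j : ℕ) < i)).biUnion (fun j => Aset G u v0 j)

def Fforce (G : SimpleGraph V) [DecidableRel G.Adj] (u : Fin d → V) (v0 : V) (i : Fin d) :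
    Finset V := Bs G u v0 i ∩ uS u

def forbC (G : SimpleGraph V) [DecidableRel G.Adj] (u : Fin d → V) (v0 : V)
    (c : V → Fin (d+1)) (i : ℕ) (w : V) : Finset (Fin (d+1)) :=
  ((G.neighborFinset w) ∩ Aprev G u v0 i).image c

def Ytarget (G : SimpleGraph V) [DecidableRel G.Adj] (u : Fin d → V) (v0 : V)
    (c : V → Fin (d+1)) (i : Fin d) : Finset (Fin (d+1)) :=
  Finset.univ \ (insert i.castSucc (insert (Fin.last d) ((Fforce G u v0 i).image c)))

def Inv (G : SimpleGraph V) [DecidableRel G.Adj] (u : Fin d → V) (v0 : V)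
    (c : V → Fin (d+1)) (i : ℕ) : Prop :=
  c v0 = Fin.last d ∧ (∀ k, c (u k) = k.castSucc) ∧
  (∀ j : Fin d, (j : ℕ) < i → Set.InjOn c (Bs G u v0 j)) ∧
  (∀ j : Fin d, (j : ℕ) < i → ∀ w ∈ Bs G u v0 j, c w ≠ j.castSucc ∧ c w ≠ Fin.last d) ∧
  (∀ j : Fin d, (j : ℕ) < i → ∀ y : Fin (d+1), y ≠ j.castSucc → y ≠ Fin.last d →
    ∃ w ∈ Bs G u v0 j, c w = y) ∧
  (∀ j j' : Fin d, (j : ℕ) < i → (j' : ℕ) < i → j ≠ j' →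
    ∀ w ∈ Bs G u v0 j, ∀ w' ∈ Bs G u v0 j', G.Adj w w' → c w ≠ c w')

lemma mem_Aset {i : Fin d} {w : V} : w ∈ Aset G u v0 i ↔ w ∈ Bs G u v0 i ∧ w ∉ uS u := by
  simp [Aset]

lemma mem_Aprev {i : ℕ} {w : V} :
    w ∈ Aprev G u v0 i ↔ ∃ j : Fin d, (j : ℕ) < i ∧ w ∈ Aset G u v0 j := by
  simp [Aprev]

lemma inv_zero (hc : Ctx G d v0 u) : ∃ c : V → Fin (d+1), Inv G u v0 c 0 := by
  classical
  refine ⟨fun x => if h : ∃ k, u k = x then h.choose.castSucc else Fin.last d,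
    ?_, ?_, ?_, ?_, ?_, ?_⟩
  · show (if h : ∃ k, u k = v0 then h.choose.castSucc else Fin.last d) = Fin.last d
    rw [dif_neg]
    rintro ⟨k, hk⟩
    exact ui_ne_v0 hc k hk
  · intro k
    show (if h : ∃ k', u k' = u k then h.choose.castSucc else Fin.last d) = k.castSucc
    rw [dif_pos ⟨k, rfl⟩]
    congr 1
    exact hc.huinj (⟨k, rfl⟩ : ∃ k', u k' = u k).choose_spec
  · intro j hj
    exact absurd hj (by omega)
  · intro j hj
    exact absurd hj (by omega)
  · intro j hj
    exact absurd hj (by omega)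
  · intro j j' hj
    exact absurd hj (by omega)

lemma card_Fforce (hc : Ctx G d v0 u) (i : Fin d) : (Fforce G u v0 i).card ≤ 1 := by
  by_contra h
  push_neg at h
  obtain ⟨a, ha, b, hb, hab⟩ := Finset.one_lt_card.1 h
  obtain ⟨k, rfl⟩ := mem_uS.1 (mem_inter.1 ha).2
  obtain ⟨l, rfl⟩ := mem_uS.1 (mem_inter.1 hb).2
  exact forced_unique hc (mem_inter.1 ha).1 (mem_inter.1 hb).1 (fun h => hab (by rw [h]))

lemma card_Aset (hc : Ctx G d v0 u) (i : Fin d) :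
    (Aset G u v0 i).card + (Fforce G u v0 i).card = d - 1 := by
  rw [← card_Bs hc i]
  exact Finset.card_sdiff_add_card_inter _ _

lemma card_Aset_ge (hc : Ctx G d v0 u) (i : Fin d) : d - 2 ≤ (Aset G u v0 i).card := by
  have h1 := card_Aset hc i
  have h2 := card_Fforce hc i
  have := hc.hd
  omega

lemma forced_ne (hc : Ctx G d v0 u) {i l : Fin d} (h : u l ∈ Bs G u v0 i) : l ≠ i := by
  intro heq
  subst heq
  exact G.loopless.irrefl _ (mem_Bs.1 h).2

end BC


namespace BC
open Finset SimpleGraph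

variable {V : Type*} [Fintype V] [DecidableEq V]
variable {G : SimpleGraph V} [DecidableRel G.Adj] {d : ℕ} {v0 : V} {u : Fin d → V}

lemma inv_extend (hc : Ctx G d v0 u) {i : ℕ} (hi : i < d) {c : V → Fin (d+1)}
    (hInv : Inv G u v0 c i)
    (hall : ∀ y ∈ Ytarget G u v0 c ⟨i, hi⟩,
      ∃ w ∈ Aset G u v0 ⟨i, hi⟩, y ∉ forbC G u v0 c i w) :
    ∃ c', Inv G u v0 c' (i + 1) := by
  classical
  obtain ⟨I1, I2, I3, I4, I5, I6⟩ := hInv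
  set ι : Fin d := ⟨i, hi⟩ with hιdef
  have hιval : (ι : ℕ) = i := rfl
  have hιlt : ∀ j : Fin d, (j : ℕ) < i → j ≠ ι := by
    intro j hj
    exact Fin.ne_of_val_ne (by omega)
  have hFmem : ∀ x ∈ Fforce G u v0 ι, ∃ l : Fin d, u l = x ∧ l ≠ ι := by
    intro x hx
    obtain ⟨l, rfl⟩ := mem_uS.1 (mem_inter.1 hx).2
    exact ⟨l, rfl, forced_ne hc (mem_inter.1 hx).1⟩
  have hFimg_notc : Fin.castSucc ι ∉ (Fforce G u v0 ι).image c := by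
    intro hmem
    obtain ⟨x, hx, hcx⟩ := mem_image.1 hmem
    obtain ⟨l, rfl, hlι⟩ := hFmem x hx
    rw [I2 l] at hcx
    exact hlι (Fin.castSucc_injective d hcx)
  have hFimg_notlast : Fin.last d ∉ (Fforce G u v0 ι).image c := by
    intro hmem
    obtain ⟨x, hx, hcx⟩ := mem_image.1 hmem
    obtain ⟨l, rfl, hlι⟩ := hFmem x hx
    rw [I2 l] at hcx
    exact (Fin.castSucc_lt_last l).ne hcx
  have hFimgcard : ((Fforce G u v0 ι).image c).card = (Fforce G u v0 ι).card := by
    apply card_image_of_injOn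
    intro x hx y hy hxy
    obtain ⟨l, rfl, -⟩ := hFmem x hx
    obtain ⟨m, rfl, -⟩ := hFmem y hy
    rw [I2 l, I2 m] at hxy
    exact congrArg u (Fin.castSucc_injective d hxy)
  have hYcard : (Ytarget G u v0 c ι).card = (Aset G u v0 ι).card := by
    have hS : (insert ι.castSucc (insert (Fin.last d) ((Fforce G u v0 ι).image c))).card
        = (Fforce G u v0 ι).card + 2 := by
      rw [card_insert_of_notMem, card_insert_of_notMem hFimg_notlast, hFimgcard]
      · simp [mem_insert, (Fin.castSucc_lt_last ι).ne, hFimg_notc]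
    have hA := card_Aset hc ι
    have hF := card_Fforce hc ι
    have hd := hc.hd
    rw [Ytarget, card_sdiff_of_subset (subset_univ _), card_univ, Fintype.card_fin, hS]
    omega
  have hforb1 : ∀ w ∈ Aset G u v0 ι, (forbC G u v0 c i w).card ≤ 1 := by
    intro w hw
    rw [card_le_one]
    intro y1 hy1 y2 hy2
    obtain ⟨t1, ht1, rfl⟩ := mem_image.1 hy1
    obtain ⟨t2, ht2, rfl⟩ := mem_image.1 hy2
    obtain ⟨j1, hj1, ht1A⟩ := mem_Aprev.1 (mem_inter.1 ht1).2
    obtain ⟨j2, hj2, ht2A⟩ := mem_Aprev.1 (mem_inter.1 ht2).2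
    have := cross_vertex_unique hc (hιlt j1 hj1) (hιlt j2 hj2)
      (mem_Aset.1 hw).1 (mem_Aset.1 hw).2
      (mem_Aset.1 ht1A).1 (mem_Aset.1 ht1A).2
      (mem_Aset.1 ht2A).1 (mem_Aset.1 ht2A).2
      ((mem_neighborFinset _ _ _).1 (mem_inter.1 ht1).1) ((mem_neighborFinset _ _ _).1 (mem_inter.1 ht2).1)
    rw [this.2]
  obtain ⟨σ, hσinj, hσmem, hσsurj⟩ := exists_good_bijection (Aset G u v0 ι)
    (Ytarget G u v0 c ι) hYcard (forbC G u v0 c i) hforb1 hall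
  have hY3 : ∀ y ∈ Ytarget G u v0 c ι,
      y ≠ ι.castSucc ∧ y ≠ Fin.last d ∧ y ∉ (Fforce G u v0 ι).image c := by
    intro y hy
    have := mem_sdiff.1 hy
    simp only [mem_insert, not_or] at this
    exact ⟨this.2.1, this.2.2.1, this.2.2.2⟩
  set c' : V → Fin (d+1) := fun x => if x ∈ Aset G u v0 ι then σ x else c x with hc'def
  have hc'A : ∀ w ∈ Aset G u v0 ι, c' w = σ w := fun w hw => if_pos hw
  have hc'n : ∀ w, w ∉ Aset G u v0 ι → c' w = c w := fun w hw => if_neg hw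
  have huA : ∀ k, u k ∉ Aset G u v0 ι := fun k h => (mem_Aset.1 h).2 (mem_uS.2 ⟨k, rfl⟩)
  have hv0A : v0 ∉ Aset G u v0 ι := fun h => v0_not_mem_Bs (mem_Aset.1 h).1
  have hBdisjA : ∀ j : Fin d, j ≠ ι → ∀ w ∈ Bs G u v0 j, w ∉ Aset G u v0 ι :=
    fun j hj w hw hwA => Bs_disjoint hc hj hw (mem_Aset.1 hwA).1
  have hsplit : ∀ j : Fin d, (j : ℕ) < i + 1 → (j : ℕ) < i ∨ j = ι := by
    intro j hj
    rcases Nat.lt_or_ge (j : ℕ) i with h | h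
    · exact Or.inl h
    · exact Or.inr (Fin.ext (by omega))
  have hBF : ∀ w ∈ Bs G u v0 ι, w ∉ Aset G u v0 ι → w ∈ Fforce G u v0 ι := by
    intro w hw hwA
    rw [mem_Aset] at hwA
    rcases Decidable.em (w ∈ uS u) with h | h
    · exact mem_inter.2 ⟨hw, h⟩
    · exact absurd ⟨hw, h⟩ hwA
  refine ⟨c', ?_, ?_, ?_, ?_, ?_, ?_⟩
  · rw [hc'n v0 hv0A]; exact I1
  · intro k; rw [hc'n _ (huA k)]; exact I2 k
  · -- InjOn
    intro j hj
    rcases hsplit j hj with hlt | rfl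
    · intro a ha b hb hab
      rw [hc'n a (hBdisjA j (hιlt j hlt) a ha), hc'n b (hBdisjA j (hιlt j hlt) b hb)] at hab
      exact I3 j hlt ha hb hab
    · intro a ha b hb hab
      rw [Finset.mem_coe] at ha hb
      by_cases haA : a ∈ Aset G u v0 ι <;> by_cases hbA : b ∈ Aset G u v0 ι
      · rw [hc'A a haA, hc'A b hbA] at hab
        exact hσinj haA hbA hab
      · exfalso
        rw [hc'A a haA, hc'n b hbA] at hab
        have hbF : c b ∈ (Fforce G u v0 ι).image c :=
          mem_image.2 ⟨b, hBF b hb hbA, rfl⟩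
        exact (hY3 _ (hσmem a haA).1).2.2 (hab ▸ hbF)
      · exfalso
        rw [hc'n a haA, hc'A b hbA] at hab
        have haF : c a ∈ (Fforce G u v0 ι).image c :=
          mem_image.2 ⟨a, hBF a ha haA, rfl⟩
        exact (hY3 _ (hσmem b hbA).1).2.2 (hab ▸ haF)
      · rw [hc'n a haA, hc'n b hbA] at hab
        obtain ⟨l, rfl, -⟩ := hFmem a (hBF a ha haA)
        obtain ⟨m, rfl, -⟩ := hFmem b (hBF b hb hbA)
        rw [I2 l, I2 m] at hab
        exact congrArg u (Fin.castSucc_injective d hab)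
  · -- colors avoid own and last
    intro j hj w hw
    rcases hsplit j hj with hlt | rfl
    · rw [hc'n w (hBdisjA j (hιlt j hlt) w hw)]
      exact I4 j hlt w hw
    · by_cases hwA : w ∈ Aset G u v0 ι
      · rw [hc'A w hwA]
        exact ⟨(hY3 _ (hσmem w hwA).1).1, (hY3 _ (hσmem w hwA).1).2.1⟩
      · rw [hc'n w hwA]
        obtain ⟨l, rfl, hlι⟩ := hFmem w (hBF w hw hwA)
        rw [I2 l]
        exact ⟨fun h => hlι (Fin.castSucc_injective d h), (Fin.castSucc_lt_last l).ne⟩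
  · -- surjectivity
    intro j hj y hy1 hy2
    rcases hsplit j hj with hlt | rfl
    · obtain ⟨w, hw, hcw⟩ := I5 j hlt y hy1 hy2
      exact ⟨w, hw, by rw [hc'n w (hBdisjA j (hιlt j hlt) w hw)]; exact hcw⟩
    · by_cases hyF : y ∈ (Fforce G u v0 ι).image c
      · obtain ⟨x, hx, hcx⟩ := mem_image.1 hyF
        refine ⟨x, (mem_inter.1 hx).1, ?_⟩
        rw [hc'n x (fun h => (mem_Aset.1 h).2 (mem_inter.1 hx).2)]
        exact hcx
      · have hyY : y ∈ Ytarget G u v0 c ι := by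
          rw [Ytarget, mem_sdiff]
          exact ⟨mem_univ _, by simp only [mem_insert, not_or]; exact ⟨hy1, hy2, hyF⟩⟩
        obtain ⟨w, hw, hcw⟩ := hσsurj y hyY
        exact ⟨w, (mem_Aset.1 hw).1, by rw [hc'A w hw]; exact hcw⟩
  · -- cross properness
    have main : ∀ j : Fin d, (j : ℕ) < i → ∀ w ∈ Bs G u v0 j, ∀ w' ∈ Bs G u v0 ι,
        G.Adj w w' → c' w ≠ c' w' := by
      intro j hj w hw w' hw' hadj
      rw [hc'n w (hBdisjA j (hιlt j hj) w hw)]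
      by_cases hw'A : w' ∈ Aset G u v0 ι
      · rw [hc'A w' hw'A]
        by_cases hwu : w ∈ uS u
        · obtain ⟨m, rfl⟩ := mem_uS.1 hwu
          have hmι : m = ι := adj_u_mem hc hw' hadj.symm
          rw [I2 m, hmι]
          exact fun h => (hY3 _ (hσmem w' hw'A).1).1 h.symm
        · have hwforb : c w ∈ forbC G u v0 c i w' := by
            apply mem_image.2
            refine ⟨w, mem_inter.2 ⟨(mem_neighborFinset _ _ _).2 hadj.symm, ?_⟩, rfl⟩
            exact mem_Aprev.2 ⟨j, hj, mem_Aset.2 ⟨hw, hwu⟩⟩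
          exact fun h => (hσmem w' hw'A).2 (h ▸ hwforb)
      · rw [hc'n w' hw'A]
        obtain ⟨l, rfl, -⟩ := hFmem w' (hBF w' hw' hw'A)
        have hlj : l = j := adj_u_mem hc hw hadj
        rw [I2 l, hlj]
        exact (I4 j hj w hw).1
    intro j j' hj hj' hne w hw w' hw' hadj
    rcases hsplit j hj with hlt | rfl <;> rcases hsplit j' hj' with hlt' | rfl
    · rw [hc'n w (hBdisjA j (hιlt j hlt) w hw), hc'n w' (hBdisjA j' (hιlt j' hlt') w' hw')]
      exact I6 j j' hlt hlt' hne w hw w' hw' hadj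
    · exact main j hlt w hw w' hw' hadj
    · exact fun h => main j' hlt' w' hw' w hw hadj.symm h.symm
    · exact absurd rfl hne

end BC


namespace BC
open Finset SimpleGraph

variable {V : Type*} [Fintype V] [DecidableEq V]
variable {G : SimpleGraph V} [DecidableRel G.Adj] {d : ℕ} {v0 : V} {u : Fin d → V}

lemma inv_step (hc : Ctx G d v0 u) {i : ℕ} (hi : i < d) {c : V → Fin (d+1)}
    (hInv : Inv G u v0 c i) : ∃ c', Inv G u v0 c' (i + 1) := by
  classical
  by_cases hall : ∀ y ∈ Ytarget G u v0 c ⟨i, hi⟩,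
      ∃ w ∈ Aset G u v0 ⟨i, hi⟩, y ∉ forbC G u v0 c i w
  · exact inv_extend hc hi hInv hall
  push_neg at hall
  obtain ⟨y0, hy0Y, hbad0⟩ := hall
  obtain ⟨I1, I2, I3, I4, I5, I6⟩ := hInv
  set ι : Fin d := ⟨i, hi⟩ with hιdef
  have hιlt : ∀ j : Fin d, (j : ℕ) < i → j ≠ ι := by
    intro j hj heq
    rw [heq] at hj
    exact lt_irrefl i hj
  have hd7 := hc.hd
  have hcardA : ∀ j, d - 2 ≤ (Aset G u v0 j).card := card_Aset_ge hc
  have hA0 : (Aset G u v0 ι).Nonempty := card_pos.1 (by have := hcardA ι; omega)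
  obtain ⟨w0, hw0⟩ := hA0
  have hbadE : ∀ w ∈ Aset G u v0 ι, ∃ z, G.Adj w z ∧ z ∈ Aprev G u v0 i ∧ c z = y0 := by
    intro w hw
    obtain ⟨z, hz, hcz⟩ := mem_image.1 (hbad0 w hw)
    exact ⟨z, (mem_neighborFinset _ _ _).1 (mem_inter.1 hz).1, (mem_inter.1 hz).2, hcz⟩
  obtain ⟨z0, hz0adj, hz0prev, hz0c⟩ := hbadE w0 hw0
  obtain ⟨j0, hj0lt, hz0A⟩ := mem_Aprev.1 hz0prev
  have hj0ι : j0 ≠ ι := hιlt j0 hj0lt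
  have hz0B : z0 ∈ Bs G u v0 j0 := (mem_Aset.1 hz0A).1
  have hz0u : z0 ∉ uS u := (mem_Aset.1 hz0A).2
  have hy0nej0 : y0 ≠ j0.castSucc := by rw [← hz0c]; exact (I4 j0 hj0lt z0 hz0B).1
  have hy0nelast : y0 ≠ Fin.last d := by rw [← hz0c]; exact (I4 j0 hj0lt z0 hz0B).2
  -- find the swap partner yv
  have hyv : ∃ yv ∈ Aset G u v0 j0, yv ≠ z0 ∧
      ∀ z, G.Adj yv z → z ∈ Aprev G u v0 i → z ∉ Bs G u v0 j0 → c z ≠ y0 := by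
    by_contra hno
    push_neg at hno
    set U := Aset G u v0 ι ∪ (Aset G u v0 j0).erase z0 with hUdef
    have hwit : ∀ w ∈ U, ∃ j' : Fin d, ((j' : ℕ) < i ∧ ∃ t, t ∈ Aset G u v0 j' ∧
        G.Adj w t ∧ c t = y0 ∧ w ∉ Bs G u v0 j') := by
      intro w hw
      rcases mem_union.1 hw with hwι | hwj0
      · obtain ⟨z, hzadj, hzprev, hzc⟩ := hbadE w hwι
        obtain ⟨j', hj', hzA⟩ := mem_Aprev.1 hzprev
        refine ⟨j', hj', z, hzA, hzadj, hzc, ?_⟩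
        exact fun hmem => Bs_disjoint hc (hιlt j' hj') hmem (mem_Aset.1 hwι).1
      · obtain ⟨z, hzadj, hzprev, hznB, hzc⟩ :=
          hno w (mem_of_mem_erase hwj0) (ne_of_mem_erase hwj0)
        obtain ⟨j', hj', hzA⟩ := mem_Aprev.1 hzprev
        have hj'j0 : j' ≠ j0 := fun h => hznB (h ▸ (mem_Aset.1 hzA).1)
        refine ⟨j', hj', z, hzA, hzadj, hzc, ?_⟩
        exact fun hmem => Bs_disjoint hc hj'j0 hmem (mem_Aset.1 (mem_of_mem_erase hwj0)).1
    set φ : V → Fin d := fun w =>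
      if h : ∃ j' : Fin d, ((j' : ℕ) < i ∧ ∃ t, t ∈ Aset G u v0 j' ∧
          G.Adj w t ∧ c t = y0 ∧ w ∉ Bs G u v0 j') then h.choose else ι with hφdef
    have hφ : ∀ w ∈ U, ((φ w : ℕ) < i ∧ ∃ t, t ∈ Aset G u v0 (φ w) ∧
        G.Adj w t ∧ c t = y0 ∧ w ∉ Bs G u v0 (φ w)) := by
      intro w hw
      have h := hwit w hw
      simp only [hφdef]
      rw [dif_pos h]
      exact h.choose_spec
    have hmaps : ∀ w ∈ U, φ w ∈ Finset.univ.erase ι := by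
      intro w hw
      exact mem_erase.2 ⟨hιlt _ (hφ w hw).1, mem_univ _⟩
    have hinj : Set.InjOn φ ↑U := by
      intro a ha b hb hab
      rw [Finset.mem_coe] at ha hb
      obtain ⟨hja, ta, htaA, htaadj, htac, hnaB⟩ := hφ a ha
      obtain ⟨hjb, tb, htbA, htbadj, htbc, hnbB⟩ := hφ b hb
      rw [← hab] at htbA hnbB
      have htt : ta = tb :=
        I3 (φ a) hja (mem_Aset.1 htaA).1 (mem_Aset.1 htbA).1 (htac.trans htbc.symm)
      rw [← htt] at htbadj
      by_contra hne
      rcases mem_union.1 ha with haι | haj0 <;> rcases mem_union.1 hb with hbι | hbj0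
      · exact hne (cross_pair_unique hc (Ne.symm (hιlt (φ a) hja))
          (mem_Aset.1 haι).1 (mem_Aset.1 haι).2 (mem_Aset.1 hbι).1 (mem_Aset.1 hbι).2
          (mem_Aset.1 htaA).1 (mem_Aset.1 htaA).2 (mem_Aset.1 htaA).1 (mem_Aset.1 htaA).2
          htaadj htbadj).1
      · have hbj0' := mem_Aset.1 (mem_of_mem_erase hbj0)
        have hj0φ : j0 ≠ φ a := fun h => hnbB (h ▸ hbj0'.1)
        exact hj0ι (cross_vertex_unique hc (Ne.symm (hιlt (φ a) hja)) hj0φ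
          (mem_Aset.1 htaA).1 (mem_Aset.1 htaA).2
          (mem_Aset.1 haι).1 (mem_Aset.1 haι).2
          hbj0'.1 hbj0'.2 htaadj.symm htbadj.symm).1.symm
      · have haj0' := mem_Aset.1 (mem_of_mem_erase haj0)
        have hj0φ : j0 ≠ φ a := fun h => hnaB (h ▸ haj0'.1)
        exact hj0ι (cross_vertex_unique hc (Ne.symm (hιlt (φ a) hja)) hj0φ
          (mem_Aset.1 htaA).1 (mem_Aset.1 htaA).2
          (mem_Aset.1 hbι).1 (mem_Aset.1 hbι).2
          haj0'.1 haj0'.2 htbadj.symm htaadj.symm).1.symm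
      · have haj0' := mem_Aset.1 (mem_of_mem_erase haj0)
        have hbj0' := mem_Aset.1 (mem_of_mem_erase hbj0)
        have hj0φ : j0 ≠ φ a := fun h => hnaB (h ▸ haj0'.1)
        exact hne (cross_pair_unique hc (Ne.symm hj0φ).symm
          haj0'.1 haj0'.2 hbj0'.1 hbj0'.2
          (mem_Aset.1 htaA).1 (mem_Aset.1 htaA).2 (mem_Aset.1 htaA).1 (mem_Aset.1 htaA).2
          htaadj htbadj).1
    have hcard := Finset.card_le_card_of_injOn φ hmaps hinj
    have hdisj : Disjoint (Aset G u v0 ι) ((Aset G u v0 j0).erase z0) := by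
      rw [Finset.disjoint_left]
      intro a haι haj0
      exact Bs_disjoint hc (Ne.symm hj0ι) (mem_Aset.1 haι).1
        (mem_Aset.1 (mem_of_mem_erase haj0)).1
    rw [hUdef, card_union_of_disjoint hdisj, card_erase_of_mem hz0A] at hcard
    rw [card_erase_of_mem (mem_univ ι), card_univ, Fintype.card_fin] at hcard
    have h1 := hcardA ι
    have h2 := hcardA j0
    omega
  obtain ⟨yv, hyvA, hyvne, hyvprop⟩ := hyv
  have hyvB : yv ∈ Bs G u v0 j0 := (mem_Aset.1 hyvA).1
  have hyvu : yv ∉ uS u := (mem_Aset.1 hyvA).2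
  have hcyvne : c yv ≠ y0 := fun h => hyvne (I3 j0 hj0lt hyvB hz0B (h.trans hz0c.symm))
  set c2 : V → Fin (d+1) := fun x => if x = z0 then c yv else if x = yv then y0 else c x
    with hc2def
  have hc2z0 : c2 z0 = c yv := if_pos rfl
  have hc2yv : c2 yv = y0 := by
    show (if yv = z0 then c yv else if yv = yv then y0 else c yv) = y0
    rw [if_neg hyvne, if_pos rfl]
  have hc2o : ∀ x, x ≠ z0 → x ≠ yv → c2 x = c x := by
    intro x h1 h2
    show (if x = z0 then c yv else if x = yv then y0 else c x) = c x
    rw [if_neg h1, if_neg h2]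
  have hz0yvBs : ∀ j : Fin d, j ≠ j0 → ∀ w ∈ Bs G u v0 j, w ≠ z0 ∧ w ≠ yv := by
    intro j hj w hw
    constructor
    · exact fun h => Bs_disjoint hc hj (h ▸ hw) hz0B
    · exact fun h => Bs_disjoint hc hj (h ▸ hw) hyvB
  have hc2B : ∀ j : Fin d, j ≠ j0 → ∀ w ∈ Bs G u v0 j, c2 w = c w := by
    intro j hj w hw
    exact hc2o w (hz0yvBs j hj w hw).1 (hz0yvBs j hj w hw).2
  -- key cross facts for the swapped vertices
  have key_z0 : ∀ j' : Fin d, j' ≠ j0 → (j' : ℕ) < i → ∀ w' ∈ Bs G u v0 j',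
      G.Adj z0 w' → c yv ≠ c w' := by
    intro j' hj' hj'lt w' hw' hadj
    by_cases hw'u : w' ∈ uS u
    · obtain ⟨m, rfl⟩ := mem_uS.1 hw'u
      have hm : m = j0 := adj_u_mem hc hz0B hadj
      rw [I2 m, hm]
      exact (I4 j0 hj0lt yv hyvB).1
    · exfalso
      have := cross_vertex_unique hc hj' (Ne.symm hj0ι) hz0B hz0u hw'
        hw'u (mem_Aset.1 hw0).1 (mem_Aset.1 hw0).2 hadj hz0adj.symm
      exact (hιlt j' hj'lt) this.1
  have key_yv : ∀ j' : Fin d, j' ≠ j0 → (j' : ℕ) < i → ∀ w' ∈ Bs G u v0 j',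
      G.Adj yv w' → y0 ≠ c w' := by
    intro j' hj' hj'lt w' hw' hadj
    by_cases hw'u : w' ∈ uS u
    · obtain ⟨m, rfl⟩ := mem_uS.1 hw'u
      have hm : m = j0 := adj_u_mem hc hyvB hadj
      rw [I2 m, hm]
      exact hy0nej0
    · have hprev : w' ∈ Aprev G u v0 i := mem_Aprev.2 ⟨j', hj'lt, mem_Aset.2 ⟨hw', hw'u⟩⟩
      have hnB : w' ∉ Bs G u v0 j0 := fun h => Bs_disjoint hc hj' hw' h
      exact (hyvprop w' hadj hprev hnB).symm
  have hInv2 : Inv G u v0 c2 i := by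
    refine ⟨?_, ?_, ?_, ?_, ?_, ?_⟩
    · rw [hc2o v0 (fun h => (mem_Bs.1 hz0B).1 h.symm) (fun h => (mem_Bs.1 hyvB).1 h.symm)]
      exact I1
    · intro k
      rw [hc2o (u k) (fun h => hz0u (mem_uS.2 ⟨k, h⟩)) (fun h => hyvu (mem_uS.2 ⟨k, h⟩))]
      exact I2 k
    · intro j hj
      by_cases hjj0 : j = j0
      · subst hjj0
        intro a ha b hb hab
        rw [Finset.mem_coe] at ha hb
        by_cases haz : a = z0
        · by_cases hbz : b = z0
          · rw [haz, hbz]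
          · by_cases hby : b = yv
            · rw [haz, hby] at hab
              rw [hc2z0, hc2yv] at hab
              exact absurd hab hcyvne
            · rw [haz, hc2z0, hc2o b hbz hby] at hab
              exact absurd (I3 j hj hyvB hb hab).symm hby
        · by_cases hay : a = yv
          · by_cases hbz : b = z0
            · rw [hay, hbz, hc2yv, hc2z0] at hab
              exact absurd hab.symm hcyvne
            · by_cases hby : b = yv
              · rw [hay, hby]
              · rw [hay, hc2yv, hc2o b hbz hby] at hab
                rw [← hz0c] at hab
                exact absurd (I3 j hj hz0B hb hab).symm hbz
          · by_cases hbz : b = z0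
            · rw [hbz, hc2z0, hc2o a haz hay] at hab
              exact absurd (I3 j hj ha hyvB hab) hay
            · by_cases hby : b = yv
              · rw [hby, hc2yv, ← hz0c, hc2o a haz hay] at hab
                exact absurd (I3 j hj ha hz0B hab) haz
              · rw [hc2o a haz hay, hc2o b hbz hby] at hab
                exact I3 j hj ha hb hab
      · intro a ha b hb hab
        rw [Finset.mem_coe] at ha hb
        rw [hc2B j hjj0 a ha, hc2B j hjj0 b hb] at hab
        exact I3 j hj ha hb hab
    · intro j hj w hw
      by_cases hjj0 : j = j0
      · subst hjj0
        by_cases hwz : w = z0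
        · rw [hwz, hc2z0]
          exact I4 j hj yv hyvB
        · by_cases hwy : w = yv
          · rw [hwy, hc2yv]
            exact ⟨hy0nej0, hy0nelast⟩
          · rw [hc2o w hwz hwy]
            exact I4 j hj w hw
      · rw [hc2B j hjj0 w hw]
        exact I4 j hj w hw
    · intro j hj y hy1 hy2
      by_cases hjj0 : j = j0
      · subst hjj0
        obtain ⟨w, hw, hcw⟩ := I5 j hj y hy1 hy2
        by_cases hwz : w = z0
        · exact ⟨yv, hyvB, by rw [hc2yv, ← hcw, hwz, hz0c]⟩
        · by_cases hwy : w = yv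
          · exact ⟨z0, hz0B, by rw [hc2z0, ← hcw, hwy]⟩
          · exact ⟨w, hw, by rw [hc2o w hwz hwy]; exact hcw⟩
      · obtain ⟨w, hw, hcw⟩ := I5 j hj y hy1 hy2
        exact ⟨w, hw, by rw [hc2B j hjj0 w hw]; exact hcw⟩
    · intro j j' hj hj' hne w hw w' hw' hadj
      by_cases hwz : w = z0
      · subst hwz
        have hjj0 : j = j0 := by
          by_contra h
          exact Bs_disjoint hc h hw hz0B
        subst hjj0
        have hw'z : w' ≠ w := hadj.ne'
        have hw'y : w' ≠ yv := (hz0yvBs j' (Ne.symm hne) w' hw').2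
        rw [hc2z0, hc2o w' hw'z hw'y]
        exact key_z0 j' (Ne.symm hne) hj' w' hw' hadj
      · by_cases hwy : w = yv
        · subst hwy
          have hjj0 : j = j0 := by
            by_contra h
            exact Bs_disjoint hc h hw hyvB
          subst hjj0
          have hw'z : w' ≠ z0 := (hz0yvBs j' (Ne.symm hne) w' hw').1
          have hw'y : w' ≠ w := hadj.ne'
          rw [hc2yv, hc2o w' hw'z hw'y]
          exact key_yv j' (Ne.symm hne) hj' w' hw' hadj
        · by_cases hw'z : w' = z0
          · subst hw'z
            have hjj0 : j' = j0 := by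
              by_contra h
              exact Bs_disjoint hc h hw' hz0B
            subst hjj0
            rw [hc2o w hwz hwy, hc2z0]
            exact (key_z0 j hne hj w hw hadj.symm).symm
          · by_cases hw'y : w' = yv
            · subst hw'y
              have hjj0 : j' = j0 := by
                by_contra h
                exact Bs_disjoint hc h hw' hyvB
              subst hjj0
              rw [hc2o w hwz hwy, hc2yv]
              exact (key_yv j hne hj w hw hadj.symm).symm
            · rw [hc2o w hwz hwy, hc2o w' hw'z hw'y]
              exact I6 j j' hj hj' hne w hw w' hw' hadj
  -- the Hall condition holds for the swapped colouring
  have hw1ex : ((Aset G u v0 ι).erase w0).Nonempty := by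
    rw [← card_pos, card_erase_of_mem hw0]
    have := hcardA ι
    omega
  obtain ⟨w1, hw1e⟩ := hw1ex
  have hw1A : w1 ∈ Aset G u v0 ι := mem_of_mem_erase hw1e
  have hw1ne : w1 ≠ w0 := ne_of_mem_erase hw1e
  obtain ⟨z1, hz1adj, hz1prev, hz1c⟩ := hbadE w1 hw1A
  have huniqgen : ∀ wx ∈ Aset G u v0 ι, ∀ zx zy, G.Adj wx zx → zx ∈ Aprev G u v0 i →
      G.Adj wx zy → zy ∈ Aprev G u v0 i → zx = zy := by
    intro wx hwx zx zy ax hx ay hy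
    obtain ⟨jx, hjx, hxA⟩ := mem_Aprev.1 hx
    obtain ⟨jy, hjy, hyA⟩ := mem_Aprev.1 hy
    exact (cross_vertex_unique hc (hιlt jx hjx) (hιlt jy hjy)
      (mem_Aset.1 hwx).1 (mem_Aset.1 hwx).2
      (mem_Aset.1 hxA).1 (mem_Aset.1 hxA).2
      (mem_Aset.1 hyA).1 (mem_Aset.1 hyA).2 ax ay).2
  have hz1ne : z1 ≠ z0 := by
    intro h
    rw [h] at hz1adj
    exact hw1ne (cross_pair_unique hc (Ne.symm hj0ι)
      (mem_Aset.1 hw1A).1 (mem_Aset.1 hw1A).2 (mem_Aset.1 hw0).1 (mem_Aset.1 hw0).2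
      hz0B hz0u hz0B hz0u hz1adj hz0adj).1
  have hc2z1 : c2 z1 = y0 := by
    by_cases h : z1 = yv
    · rw [h, hc2yv]
    · rw [hc2o z1 hz1ne h]
      exact hz1c
  have hall2 : ∀ y ∈ Ytarget G u v0 c2 ⟨i, hi⟩,
      ∃ w ∈ Aset G u v0 ⟨i, hi⟩, y ∉ forbC G u v0 c2 i w := by
    intro y _
    by_cases hyw0 : y ∈ forbC G u v0 c2 i w0
    · refine ⟨w1, hw1A, fun hyw1 => ?_⟩
      obtain ⟨t, ht, htc⟩ := mem_image.1 hyw0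
      have htz0 : t = z0 := huniqgen w0 hw0 t z0
        ((mem_neighborFinset _ _ _).1 (mem_inter.1 ht).1) (mem_inter.1 ht).2 hz0adj hz0prev
      obtain ⟨t', ht', htc'⟩ := mem_image.1 hyw1
      have htz1 : t' = z1 := huniqgen w1 hw1A t' z1
        ((mem_neighborFinset _ _ _).1 (mem_inter.1 ht').1) (mem_inter.1 ht').2 hz1adj hz1prev
      rw [htz0, hc2z0] at htc
      rw [htz1, hc2z1] at htc'
      exact hcyvne (htc.trans htc'.symm)
    · exact ⟨w0, hw0, hyw0⟩
  exact inv_extend hc hi hInv2 hall2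

end BC


namespace BC
open Finset SimpleGraph

variable {V : Type*} [Fintype V] [DecidableEq V]
variable {G : SimpleGraph V} [DecidableRel G.Adj] {d : ℕ} {v0 : V} {u : Fin d → V}

lemma inv_all (hc : Ctx G d v0 u) : ∃ c, Inv G u v0 c d := by
  suffices h : ∀ i, i ≤ d → ∃ c, Inv G u v0 c i from h d le_rfl
  intro i
  induction i with
  | zero => exact fun _ => inv_zero hc
  | succ n ih =>
    intro h
    obtain ⟨c, hcInv⟩ := ih (by omega)
    exact inv_step hc (by omega) hcInv

lemma exists_bcoloring (hc : Ctx G d v0 u) :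
    ∃ c : V → Fin (d+1), IsBColoring G c := by
  classical
  obtain ⟨c, I1, I2, I3, I4, I5, I6⟩ := inv_all hc
  set D : Finset V := insert v0 (uS u ∪ Finset.univ.biUnion (Bs G u v0)) with hDdef
  have hmemD : ∀ x, x ∈ D ↔ x = v0 ∨ (∃ k, u k = x) ∨ ∃ j, x ∈ Bs G u v0 j := by
    intro x
    simp [hDdef, mem_uS, uS]
  have hv0D : v0 ∈ D := (hmemD v0).2 (Or.inl rfl)
  have huD : ∀ k, u k ∈ D := fun k => (hmemD _).2 (Or.inr (Or.inl ⟨k, rfl⟩))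
  have hBD : ∀ j, ∀ w ∈ Bs G u v0 j, w ∈ D := fun j w hw => (hmemD _).2 (Or.inr (Or.inr ⟨j, hw⟩))
  have hproperD : ∀ x ∈ D, ∀ y ∈ D, G.Adj x y → c x ≠ c y := by
    intro x hx y hy hadj
    rcases (hmemD x).1 hx with rfl | ⟨k, rfl⟩ | ⟨j, hxB⟩ <;>
      rcases (hmemD y).1 hy with rfl | ⟨m, rfl⟩ | ⟨j', hyB⟩
    · exact absurd hadj (G.loopless.irrefl _)
    · rw [I1, I2 m]
      exact fun h => (Fin.castSucc_lt_last m).ne h.symm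
    · rw [I1]
      exact fun h => (I4 j' j'.isLt y hyB).2 h.symm
    · rw [I1, I2 k]
      exact (Fin.castSucc_lt_last k).ne
    · rw [I2 k, I2 m]
      intro h
      exact hadj.ne (congrArg u (Fin.castSucc_injective d h))
    · have hkj' : k = j' := adj_u_mem hc hyB hadj.symm
      rw [I2 k, hkj']
      exact fun h => (I4 j' j'.isLt y hyB).1 h.symm
    · rw [I1]
      exact (I4 j j.isLt x hxB).2
    · have hmj : m = j := adj_u_mem hc hxB hadj
      rw [I2 m, hmj]
      exact (I4 j j.isLt x hxB).1
    · by_cases hjj' : j = j'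
      · subst hjj'
        exact fun h => hadj.ne (I3 j j.isLt hxB hyB h)
      · exact I6 j j' j.isLt j'.isLt hjj' x hxB y hyB hadj
  obtain ⟨c', hc'eq, hc'prop⟩ := extend_coloring G d hc.hreg (Finset.univ \ D) c
    (by
      intro x y hx hy hadj
      simp only [mem_sdiff, mem_univ, true_and, not_not] at hx hy
      exact hproperD x hx y hy hadj)
  have hkeep : ∀ x ∈ D, c' x = c x := by
    intro x hx
    exact hc'eq x (by simp [hx])
  refine ⟨c', hc'prop, ?_⟩
  intro j
  by_cases hj : j = Fin.last d
  · refine ⟨v0, by rw [hkeep v0 hv0D, I1, hj], ?_⟩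
    intro j' hj'
    rw [hkeep v0 hv0D, I1] at hj'
    obtain ⟨k, hk⟩ := Fin.exists_castSucc_eq.2 hj'
    exact ⟨u k, hc.huadj k, by rw [hkeep _ (huD k), I2 k, hk]⟩
  · obtain ⟨k, hk⟩ := Fin.exists_castSucc_eq.2 hj
    refine ⟨u k, by rw [hkeep _ (huD k), I2 k, hk], ?_⟩
    intro j' hj'
    rw [hkeep _ (huD k), I2 k] at hj'
    by_cases hj'last : j' = Fin.last d
    · exact ⟨v0, (hc.huadj k).symm, by rw [hkeep v0 hv0D, I1, hj'last]⟩
    · obtain ⟨w, hw, hcw⟩ := I5 k k.isLt j' hj' hj'last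
      exact ⟨w, (mem_Bs.1 hw).2, by rw [hkeep w (hBD k w hw)]; exact hcw⟩

end BC

section Final
open Finset SimpleGraph BC

variable {V : Type*} [Fintype V] [DecidableEq V]

lemma bcoloring_card_le (G : SimpleGraph V) [DecidableRel G.Adj] (d : ℕ)
    (hreg : G.IsRegularOfDegree d) {k : ℕ} (c : V → Fin k) (hb : IsBColoring G c) :
    k ≤ d + 1 := by
  classical
  rcases Nat.eq_zero_or_pos k with rfl | hk
  · omega
  obtain ⟨v, -, hdom⟩ := hb.2 ⟨0, hk⟩
  set f : Fin k → V := fun j => if h : ∃ x, G.Adj v x ∧ c x = j then h.choose else v with hfdef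
  have hf : ∀ j, j ≠ c v → G.Adj v (f j) ∧ c (f j) = j := by
    intro j hj
    have h := hdom j hj
    simp only [hfdef]
    rw [dif_pos h]
    exact h.choose_spec
  have hmaps : ∀ j ∈ Finset.univ.erase (c v), f j ∈ G.neighborFinset v :=
    fun j hj => (mem_neighborFinset _ _ _).2 (hf j (mem_erase.1 hj).1).1
  have hinj : Set.InjOn f ↑(Finset.univ.erase (c v)) := by
    intro a ha b hb' hab
    rw [Finset.mem_coe, mem_erase] at ha hb'
    have h1 := (hf a ha.1).2
    have h2 := (hf b hb'.1).2
    rw [← h1, ← h2, hab]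
  have hle := Finset.card_le_card_of_injOn f hmaps hinj
  rw [card_erase_of_mem (mem_univ _), card_univ, Fintype.card_fin] at hle
  rw [G.card_neighborFinset_eq_degree, hreg v] at hle
  omega

end Final


theorem bNum_eq_of_no_C4_C6 (G : SimpleGraph V) [Nonempty V] [DecidableRel G.Adj]
    (d : ℕ) (hd : 7 ≤ d) (hreg : G.IsRegularOfDegree d)
    (h4 : NoCycleOfLength G 4) (h6 : NoCycleOfLength G 6) :
    bNum G = d + 1 := by
  classical
  set v0 : V := Classical.arbitrary V with hv0def
  have hcard : (G.neighborFinset v0).card = d := by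
    rw [G.card_neighborFinset_eq_degree, hreg v0]
  set e := Finset.equivFinOfCardEq hcard with hedef
  set u : Fin d → V := fun i => ((e.symm i : ↥(G.neighborFinset v0)) : V) with hudef
  have huinj : Function.Injective u := by
    intro a b h
    apply e.symm.injective
    exact Subtype.ext h
  have huadj : ∀ i, G.Adj v0 (u i) := fun i => (mem_neighborFinset _ _ _).1 (e.symm i).2
  have husurj : ∀ x, G.Adj v0 x → ∃ i, u i = x := by
    intro x hx
    exact ⟨e ⟨x, (mem_neighborFinset _ _ _).2 hx⟩, by simp [hudef]⟩
  have hctx : BC.Ctx G d v0 u := ⟨hd, hreg, h4, h6, huinj, huadj, husurj⟩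
  obtain ⟨c, hbc⟩ := BC.exists_bcoloring hctx
  have hmem : d + 1 ∈ {k | ∃ c : V → Fin k, IsBColoring G c} := ⟨c, hbc⟩
  have hub : ∀ k ∈ {k | ∃ c : V → Fin k, IsBColoring G c}, k ≤ d + 1 := by
    rintro k ⟨c', hc'⟩
    exact bcoloring_card_le G d hreg c' hc'
  apply le_antisymm
  · exact csSup_le ⟨d+1, hmem⟩ hub
  · exact le_csSup ⟨d+1, hub⟩ hmem
end

section
/- Let G be a d-regular graph with d ≥ 7 containing no cycle of length 4, and suppose there exists a vertex x with neighbors x_1, ..., x_d satisfying: (1) for every i, the number of neighbors v of x_i such that v has a neighbor in the union of N(x_j) over j ≠ i is at most ⌈(d-1)/2⌉ - 1, and (2) for every i and every neighbor v of x_i, the number of neighbors of v lying in the union of N(x_j) over j ≠ i is at most ⌈(d-1)/2⌉ - 1. Then b(G) = d + 1. -/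
open SimpleGraph

variable {V : Type*} [Fintype V] [DecidableEq V]

set_option linter.unusedSectionVars false

open Finset in
lemma exists_c4 (G : SimpleGraph V) {a b c d' : V} (hab : G.Adj a b) (hbc : G.Adj b c)
    (hcd : G.Adj c d') (hda : G.Adj d' a) (hac : a ≠ c) (hbd : b ≠ d') :
    ¬ NoCycleOfLength G 4 := by
  intro h
  refine h a (Walk.cons hab (Walk.cons hbc (Walk.cons hcd (Walk.cons hda Walk.nil)))) ?_ (by simp)
  have h1 := hab.ne
  have h2 := hbc.ne
  have h3 := hcd.ne
  have h4 := hda.ne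
  rw [Walk.isCycle_def, Walk.isTrail_def]
  refine ⟨?_, by simp, ?_⟩
  · simp only [Walk.edges_cons, Walk.edges_nil, List.nodup_cons, List.mem_cons,
      List.not_mem_nil, List.nodup_nil, Sym2.eq_iff]
    aesop
  · simp only [Walk.support_cons, Walk.support_nil, List.tail_cons, List.nodup_cons,
      List.mem_cons, List.not_mem_nil]
    aesop

open Finset in
lemma greedy_ext (G : SimpleGraph V) [DecidableRel G.Adj] (d : ℕ)
    (hdeg : ∀ v, G.degree v ≤ d) :
    ∀ (n : ℕ) (A : Finset V) (c : V → Fin (d+1)),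
      (Finset.univ \ A).card ≤ n →
      (∀ u ∈ A, ∀ v ∈ A, G.Adj u v → c u ≠ c v) →
      ∃ c' : V → Fin (d+1), (∀ a ∈ A, c' a = c a) ∧ ProperColoring G c' := by
  intro n
  induction n with
  | zero =>
    intro A c hn hc
    have hA : A = Finset.univ := by
      have := Finset.card_eq_zero.mp (Nat.le_zero.mp hn)
      rw [Finset.sdiff_eq_empty_iff_subset] at this
      exact Finset.Subset.antisymm (Finset.subset_univ A) this
    exact ⟨c, fun a _ => rfl, fun u v huv => hc u (by simp [hA]) v (by simp [hA]) huv⟩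
  | succ n ih =>
    intro A c hn hc
    by_cases hA : A = Finset.univ
    · exact ⟨c, fun a _ => rfl, fun u v huv => hc u (by simp [hA]) v (by simp [hA]) huv⟩
    · obtain ⟨v, hv⟩ : ∃ v, v ∉ A := by
        by_contra h
        push_neg at h
        exact hA (Finset.eq_univ_iff_forall.mpr h)
      set F : Finset (Fin (d+1)) := (G.neighborFinset v ∩ A).image c with hF
      have hFcard : F.card < d + 1 := by
        calc F.card ≤ (G.neighborFinset v ∩ A).card := Finset.card_image_le
          _ ≤ (G.neighborFinset v).card := Finset.card_le_card Finset.inter_subset_left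
          _ = G.degree v := rfl
          _ ≤ d := hdeg v
          _ < d + 1 := Nat.lt_succ_self d
      obtain ⟨m, hm⟩ : ∃ m : Fin (d+1), m ∉ F := by
        by_contra h
        push_neg at h
        have : Finset.univ ⊆ F := fun m _ => h m
        have := Finset.card_le_card this
        simp [Fintype.card_fin] at this
        omega
      set c1 := Function.update c v m with hc1
      have hproper : ∀ u ∈ insert v A, ∀ w ∈ insert v A, G.Adj u w → c1 u ≠ c1 w := by
        intro u hu w hw huw
        by_cases huv : u = v
        · subst huv
          have hwv : w ≠ u := huw.ne'
          have hwA : w ∈ A := by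
            rcases Finset.mem_insert.mp hw with h | h
            · exact absurd h hwv
            · exact h
          rw [hc1, Function.update_self, Function.update_of_ne hwv]
          intro h
          exact hm (Finset.mem_image.mpr ⟨w, Finset.mem_inter.mpr
            ⟨(G.mem_neighborFinset u w).mpr huw, hwA⟩, h.symm⟩)
        · by_cases hwv : w = v
          · subst hwv
            have huA : u ∈ A := by
              rcases Finset.mem_insert.mp hu with h | h
              · exact absurd h huv
              · exact h
            rw [hc1, Function.update_self, Function.update_of_ne huv]
            intro h
            exact hm (Finset.mem_image.mpr ⟨u, Finset.mem_inter.mpr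
              ⟨(G.mem_neighborFinset w u).mpr huw.symm, huA⟩, h⟩)
          · have huA : u ∈ A := by
              rcases Finset.mem_insert.mp hu with h | h
              · exact absurd h huv
              · exact h
            have hwA : w ∈ A := by
              rcases Finset.mem_insert.mp hw with h | h
              · exact absurd h hwv
              · exact h
            rw [hc1, Function.update_of_ne huv, Function.update_of_ne hwv]
            exact hc u huA w hwA huw
      have hcard : (Finset.univ \ insert v A).card ≤ n := by
        have h1 : Finset.univ \ insert v A ⊂ Finset.univ \ A := by
          refine Finset.ssubset_iff_of_subset (Finset.sdiff_subset_sdiff le_rfl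
            (Finset.subset_insert v A)) |>.mpr ?_
          exact ⟨v, Finset.mem_sdiff.mpr ⟨Finset.mem_univ v, hv⟩,
            fun h => (Finset.mem_sdiff.mp h).2 (Finset.mem_insert_self v A)⟩
        have := Finset.card_lt_card h1
        omega
      obtain ⟨c', hc'1, hc'2⟩ := ih (insert v A) c1 hcard hproper
      refine ⟨c', fun a ha => ?_, hc'2⟩
      have hav : a ≠ v := fun h => hv (h ▸ ha)
      rw [hc'1 a (Finset.mem_insert_of_mem ha), hc1, Function.update_of_ne hav]

open Finset in
lemma bcol_le (G : SimpleGraph V) [Nonempty V] [DecidableRel G.Adj] (d : ℕ)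
    (hreg : G.IsRegularOfDegree d) (k : ℕ) (hk : ∃ c : V → Fin k, IsBColoring G c) :
    k ≤ d + 1 := by
  obtain ⟨c, hp, hdom⟩ := hk
  rcases k with _ | k'
  · exact (c (Classical.arbitrary V)).elim0
  · obtain ⟨v, hv, hdv⟩ := hdom 0
    classical
    set f : {m : Fin (k'+1) // m ≠ c v} → {u // u ∈ G.neighborFinset v} :=
      fun m => ⟨(hdv m.1 m.2).choose, (G.mem_neighborFinset v _).mpr (hdv m.1 m.2).choose_spec.1⟩
      with hf
    have hinj : Function.Injective f := by
      intro m1 m2 h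
      have h1 := (hdv m1.1 m1.2).choose_spec.2
      have h2 := (hdv m2.1 m2.2).choose_spec.2
      have : (f m1).1 = (f m2).1 := congrArg Subtype.val h
      rw [hf] at this
      apply Subtype.ext
      rw [← h1, ← h2]
      exact congrArg c this
    have hcard := Fintype.card_le_of_injective f hinj
    have h1 : Fintype.card {m : Fin (k'+1) // m ≠ c v} = k' := by
      rw [Fintype.card_subtype_compl]
      simp
    have h2 : Fintype.card {u // u ∈ G.neighborFinset v} = d := by
      rw [Fintype.card_coe]
      exact hreg v
    omega

open Finset in
lemma exists_bcol (G : SimpleGraph V) [Nonempty V]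
    [DecidableRel G.Adj] (d : ℕ) (hd : 7 ≤ d) (hreg : G.IsRegularOfDegree d)
    (h4 : NoCycleOfLength G 4)
    (x : V) (e : Fin d ↪ V) (hnbr : ∀ v, G.Adj x v ↔ ∃ i, e i = v)
    (h1 : ∀ i : Fin d,
      {v : V | G.Adj (e i) v ∧ ∃ w, G.Adj v w ∧ ∃ j, j ≠ i ∧ G.Adj (e j) w}.ncard ≤
        ceilHalf (d - 1) - 1)
    (h2 : ∀ i : Fin d, ∀ v, G.Adj (e i) v →
      {w : V | G.Adj v w ∧ ∃ j, j ≠ i ∧ G.Adj (e j) w}.ncard ≤ ceilHalf (d - 1) - 1) :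
    ∃ c : V → Fin (d+1), IsBColoring G c := by
  classical
  -- basic numerics
  set C := ceilHalf (d - 1) - 1 with hCdef
  have hCnum : C = d / 2 - 1 := by
    rw [hCdef]; unfold ceilHalf; omega
  -- adjacency of x to the e i
  have hx : ∀ i, G.Adj x (e i) := fun i => (hnbr (e i)).mpr ⟨i, rfl⟩
  have hex : ∀ i, e i ≠ x := fun i => (hx i).ne'
  -- the punctured neighborhoods
  set S : Fin d → Finset V := fun i => (G.neighborFinset (e i)).erase x with hSdef
  have mem_S : ∀ {v : V} {i : Fin d}, v ∈ S i ↔ v ≠ x ∧ G.Adj (e i) v := by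
    intro v i
    rw [hSdef]
    simp [Finset.mem_erase, mem_neighborFinset]
  have hScard : ∀ i, (S i).card = d - 1 := by
    intro i
    rw [hSdef]
    simp only
    rw [Finset.card_erase_of_mem ((mem_neighborFinset _ _ _).mpr (hx i).symm)]
    rw [card_neighborFinset_eq_degree, hreg (e i)]
  have hxS : ∀ i, x ∉ S i := fun i h => (mem_S.mp h).1 rfl
  have hUniq : ∀ {v : V} {i j : Fin d}, v ∈ S i → v ∈ S j → i = j := by
    intro v i j hi hj
    by_contra hij
    obtain ⟨hvx, hiv⟩ := mem_S.mp hi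
    obtain ⟨_, hjv⟩ := mem_S.mp hj
    exact exists_c4 G (hx i) hiv hjv.symm (hx j).symm (Ne.symm hvx)
      (e.injective.ne hij) h4
  -- the precolored set
  set A0 : Finset V := insert x (Finset.univ.image e) with hA0def
  have mem_A0 : ∀ {v : V}, v ∈ A0 ↔ v = x ∨ ∃ k, e k = v := by
    intro v
    rw [hA0def]
    simp
  -- finset versions of the hypothesis sets
  set h1F : Fin d → Finset V := fun i => univ.filter
    (fun v => G.Adj (e i) v ∧ ∃ w, G.Adj v w ∧ ∃ j, j ≠ i ∧ G.Adj (e j) w) with h1Fdef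
  have h1F_card : ∀ i, (h1F i).card ≤ C := by
    intro i
    have : ↑(h1F i) =
        {v : V | G.Adj (e i) v ∧ ∃ w, G.Adj v w ∧ ∃ j, j ≠ i ∧ G.Adj (e j) w} := by
      ext v; simp [h1Fdef]
    rw [← Set.ncard_coe_finset, this]
    exact h1 i
  have mem_h1F : ∀ {v : V} {i : Fin d}, v ∈ h1F i ↔
      G.Adj (e i) v ∧ ∃ w, G.Adj v w ∧ ∃ j, j ≠ i ∧ G.Adj (e j) w := by
    intro v i; simp [h1Fdef]
  set h2F : Fin d → V → Finset V := fun i v => univ.filter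
    (fun w => G.Adj v w ∧ ∃ j, j ≠ i ∧ G.Adj (e j) w) with h2Fdef
  have h2F_card : ∀ i v, G.Adj (e i) v → (h2F i v).card ≤ C := by
    intro i v hv
    have : ↑(h2F i v) = {w : V | G.Adj v w ∧ ∃ j, j ≠ i ∧ G.Adj (e j) w} := by
      ext w; simp [h2Fdef]
    rw [← Set.ncard_coe_finset, this]
    exact h2 i v hv
  have mem_h2F : ∀ {w v : V} {i : Fin d}, w ∈ h2F i v ↔
      G.Adj v w ∧ ∃ j, j ≠ i ∧ G.Adj (e j) w := by
    intro w v i; simp [h2Fdef]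
  -- second neighborhood and constrained vertices
  set UF : Finset V := univ.filter (fun v => ∃ i, v ∈ S i) with hUFdef
  have mem_UF : ∀ {v : V}, v ∈ UF ↔ ∃ i, v ∈ S i := by intro v; simp [hUFdef]
  set Con : Finset V := (UF \ A0).filter (fun v => ∃ i, v ∈ S i ∧ v ∈ h1F i) with hConDef
  -- palettes
  set pal : Fin d → Finset (Fin (d+1)) := fun k =>
    univ \ {Fin.castSucc k, Fin.last d} with hpaldef
  have mem_pal : ∀ {m : Fin (d+1)} {k : Fin d},
      m ∈ pal k ↔ m ≠ Fin.castSucc k ∧ m ≠ Fin.last d := by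
    intro m k
    rw [hpaldef]
    simp only [Finset.mem_sdiff, Finset.mem_univ, true_and, Finset.mem_insert,
      Finset.mem_singleton]
    tauto
  have pal_card : ∀ k, (pal k).card = d - 1 := by
    intro k
    rw [hpaldef]
    simp only
    rw [Finset.card_sdiff_of_subset (Finset.subset_univ _), Finset.card_univ, Fintype.card_fin,
      Finset.card_pair (Fin.castSucc_lt_last k).ne]
    omega
  -- the base coloring
  set c0 : V → Fin (d+1) := fun v =>
    if h : ∃ k, e k = v then Fin.castSucc h.choose else Fin.last d with hc0def
  have hc0x : c0 x = Fin.last d := by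
    rw [hc0def]
    simp only
    rw [dif_neg]
    rintro ⟨k, hk⟩
    exact hex k hk
  have hc0e : ∀ k, c0 (e k) = Fin.castSucc k := by
    intro k
    rw [hc0def]
    simp only
    have h : ∃ k', e k' = e k := ⟨k, rfl⟩
    rw [dif_pos h]
    congr 1
    exact e.injective h.choose_spec
  -- base coloring satisfies the invariant for the empty extension
  have hbase :
        c0 x = Fin.last d ∧
        (∀ k, c0 (e k) = Fin.castSucc k) ∧
        (∀ u ∈ (∅ : Finset V), ∀ i, u ∈ S i → c0 u ∈ pal i) ∧
        (∀ u ∈ A0 ∪ (∅ : Finset V), ∀ w ∈ A0 ∪ (∅ : Finset V),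
          G.Adj u w → c0 u ≠ c0 w) ∧
        (∀ i, ∀ u ∈ A0 ∪ (∅ : Finset V), ∀ w ∈ A0 ∪ (∅ : Finset V),
          u ∈ S i → w ∈ S i → c0 u = c0 w → u = w) := by
    refine ⟨hc0x, hc0e, by simp, ?_, ?_⟩
    · intro u hu w hw huw
      rw [Finset.union_empty] at hu hw
      rcases mem_A0.mp hu with rfl | ⟨k, rfl⟩
      · rcases mem_A0.mp hw with rfl | ⟨l, rfl⟩
        · exact absurd huw (G.irrefl)
        · rw [hc0x, hc0e]
          exact (Fin.castSucc_lt_last l).ne'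
      · rcases mem_A0.mp hw with rfl | ⟨l, rfl⟩
        · rw [hc0x, hc0e]
          exact (Fin.castSucc_lt_last k).ne
        · rw [hc0e, hc0e]
          intro hkl
          exact huw.ne (congrArg e (Fin.castSucc_inj.mp hkl))
    · intro i u hu w hw huS hwS hc
      rw [Finset.union_empty] at hu hw
      rcases mem_A0.mp hu with rfl | ⟨k, rfl⟩
      · exact absurd huS (hxS i)
      · rcases mem_A0.mp hw with rfl | ⟨l, rfl⟩
        · exact absurd hwS (hxS i)
        · rw [hc0e, hc0e] at hc
          exact congrArg e (Fin.castSucc_inj.mp hc)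
  -- the main induction: coloring A0 ∪ ((UF \ A0) \ B)
  have hind : ∀ (n : ℕ) (B : Finset V), B ⊆ UF \ A0 → ((UF \ A0) \ B).card ≤ n →
      ∃ c : V → Fin (d+1),
        c x = Fin.last d ∧
        (∀ k, c (e k) = Fin.castSucc k) ∧
        (∀ u ∈ (UF \ A0) \ B, ∀ i, u ∈ S i → c u ∈ pal i) ∧
        (∀ u ∈ A0 ∪ ((UF \ A0) \ B), ∀ w ∈ A0 ∪ ((UF \ A0) \ B),
          G.Adj u w → c u ≠ c w) ∧
        (∀ i, ∀ u ∈ A0 ∪ ((UF \ A0) \ B), ∀ w ∈ A0 ∪ ((UF \ A0) \ B),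
          u ∈ S i → w ∈ S i → c u = c w → u = w) := by
    intro n
    induction n with
    | zero =>
      intro B hB hcard
      have hD : (UF \ A0) \ B = ∅ := Finset.card_eq_zero.mp (Nat.le_zero.mp hcard)
      rw [hD]
      exact ⟨c0, hbase⟩
    | succ n ih =>
      intro B hB hcard
      by_cases hD : ((UF \ A0) \ B) = ∅
      · rw [hD]
        exact ⟨c0, hbase⟩
      · -- choose the vertex to color last: unconstrained if possible
        obtain ⟨v, hvD, hvchoice⟩ : ∃ v ∈ (UF \ A0) \ B,
            ((((UF \ A0) \ B) \ Con).Nonempty → v ∉ Con) := by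
          by_cases h : ((((UF \ A0) \ B)) \ Con).Nonempty
          · obtain ⟨v, hv⟩ := h
            exact ⟨v, (Finset.mem_sdiff.mp hv).1, fun _ => (Finset.mem_sdiff.mp hv).2⟩
          · obtain ⟨v, hv⟩ := Finset.nonempty_iff_ne_empty.mpr hD
            exact ⟨v, hv, fun hh => absurd hh h⟩
        have hvUA : v ∈ UF \ A0 := (Finset.mem_sdiff.mp hvD).1
        have hvUF : v ∈ UF := (Finset.mem_sdiff.mp hvUA).1
        have hvA0 : v ∉ A0 := (Finset.mem_sdiff.mp hvUA).2
        obtain ⟨iv, hviS⟩ := mem_UF.mp hvUF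
        have hvx : v ≠ x := fun h => hvA0 (mem_A0.mpr (Or.inl h))
        have hvek : ∀ k, v ≠ e k := fun k h => hvA0 (mem_A0.mpr (Or.inr ⟨k, h.symm⟩))
        -- recursive call
        have hD'eq : (UF \ A0) \ insert v B = ((UF \ A0) \ B).erase v := by
          ext a
          simp only [Finset.mem_sdiff, Finset.mem_erase, Finset.mem_insert]
          tauto
        have hB' : insert v B ⊆ UF \ A0 := Finset.insert_subset hvUA hB
        have hcard' : ((UF \ A0) \ insert v B).card ≤ n := by
          rw [hD'eq, Finset.card_erase_of_mem hvD]
          omega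
        obtain ⟨c, hcx, hce, hpalc, hprop, hinj⟩ := ih (insert v B) hB' hcard'
        set D' : Finset V := (UF \ A0) \ insert v B with hD'def
        have hvD' : v ∉ D' := by
          rw [hD'eq]
          exact Finset.notMem_erase v _
        have hvcol : v ∉ A0 ∪ D' := by
          rw [Finset.mem_union]
          rintro (h | h)
          · exact hvA0 h
          · exact hvD' h
        have hD'sub : ∀ {u : V}, u ∈ D' → u ∈ (UF \ A0) \ B := by
          intro u h
          exact (Finset.mem_erase.mp (hD'eq ▸ h)).2
        -- the forbidden colors
        set K : Finset V := (A0 ∪ D') ∩ (S iv ∪ G.neighborFinset v) with hKdef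
        set F : Finset (Fin (d+1)) := K.image c with hFdef
        -- dichotomy for elements of K.erase (e iv)
        have hdich : ∀ u ∈ K.erase (e iv),
            u ∈ (A0 ∪ D') ∩ S iv ∨
            (u ∈ D' ∧ G.Adj v u ∧ ∃ j, j ≠ iv ∧ G.Adj (e j) u) := by
          intro u hu
          obtain ⟨hune, huK⟩ := Finset.mem_erase.mp hu
          obtain ⟨hucol, huSN⟩ := Finset.mem_inter.mp huK
          by_cases huS : u ∈ S iv
          · exact Or.inl (Finset.mem_inter.mpr ⟨hucol, huS⟩)
          · right
            have hadj : G.Adj v u := by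
              rcases Finset.mem_union.mp huSN with h | h
              · exact absurd h huS
              · exact (mem_neighborFinset _ _ _).mp h
            rcases Finset.mem_union.mp hucol with h | h
            · rcases mem_A0.mp h with rfl | ⟨k, rfl⟩
              · obtain ⟨k, hk⟩ := (hnbr v).mp hadj.symm
                exact absurd hk.symm (hvek k)
              · have : v ∈ S k := mem_S.mpr ⟨hvx, hadj.symm⟩
                exact absurd (congrArg e (hUniq this hviS)) hune
            · refine ⟨h, hadj, ?_⟩
              have huUA : u ∈ UF \ A0 := (Finset.mem_sdiff.mp (hD'sub h)).1
              obtain ⟨j, hjS⟩ := mem_UF.mp (Finset.mem_sdiff.mp huUA).1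
              exact ⟨j, fun hji => huS (hji ▸ hjS), (mem_S.mp hjS).2⟩
        -- membership of colored vertices of S iv
        have hT1v : ∀ u ∈ (A0 ∪ D') ∩ S iv, u ≠ v := by
          intro u hu h
          exact hvcol (h ▸ (Finset.mem_inter.mp hu).1)
        -- the cardinality bound for the relevant forbidden colors
        have hKb : (K.erase (e iv)).card < d - 1 := by
          by_cases hvCon : v ∈ Con
          · -- constrained case
            have hDCon : ((UF \ A0) \ B) \ Con = ∅ := by
              by_contra hne
              exact (hvchoice (Finset.nonempty_iff_ne_empty.mpr hne)) hvCon
            have hDC : (UF \ A0) \ B ⊆ Con := by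
              intro u hu
              by_contra hc
              exact (Finset.notMem_empty u) (hDCon ▸ Finset.mem_sdiff.mpr ⟨hu, hc⟩)
            have hvh1 : v ∈ h1F iv := by
              obtain ⟨i', hi'S, hi'h⟩ := (Finset.mem_filter.mp hvCon).2
              rwa [hUniq hi'S hviS] at hi'h
            have hT1 : (A0 ∪ D') ∩ S iv ⊆ (h1F iv).erase v := by
              intro u hu
              obtain ⟨hucol, huS⟩ := Finset.mem_inter.mp hu
              refine Finset.mem_erase.mpr ⟨hT1v u hu, ?_⟩
              rcases Finset.mem_union.mp hucol with h | h
              · rcases mem_A0.mp h with rfl | ⟨k, rfl⟩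
                · exact absurd huS (hxS iv)
                · refine mem_h1F.mpr ⟨(mem_S.mp huS).2, x, (hx k).symm, ?_⟩
                  have : Nontrivial (Fin d) := Fin.nontrivial_iff_two_le.mpr (by omega)
                  obtain ⟨j, hj⟩ := exists_ne iv
                  exact ⟨j, hj, (hx j).symm⟩
              · obtain ⟨i', hi'S, hi'h⟩ :=
                  (Finset.mem_filter.mp (hDC (hD'sub h))).2
                rwa [hUniq hi'S huS] at hi'h
            have hT2 : K.erase (e iv) \ S iv ⊆ h2F iv v := by
              intro u hu
              obtain ⟨huK, huS⟩ := Finset.mem_sdiff.mp hu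
              rcases hdich u huK with h | ⟨_, hadj, hj⟩
              · exact absurd (Finset.mem_inter.mp h).2 huS
              · exact mem_h2F.mpr ⟨hadj, hj⟩
            have hsplit : K.erase (e iv) ⊆ ((A0 ∪ D') ∩ S iv) ∪ (K.erase (e iv) \ S iv) := by
              intro u hu
              by_cases h : u ∈ S iv
              · exact Finset.mem_union_left _ (Finset.mem_inter.mpr
                  ⟨(Finset.mem_inter.mp (Finset.mem_erase.mp hu).2).1, h⟩)
              · exact Finset.mem_union_right _ (Finset.mem_sdiff.mpr ⟨hu, h⟩)
            have hb1 : ((A0 ∪ D') ∩ S iv).card ≤ C - 1 := by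
              calc ((A0 ∪ D') ∩ S iv).card ≤ ((h1F iv).erase v).card :=
                    Finset.card_le_card hT1
                _ = (h1F iv).card - 1 := Finset.card_erase_of_mem hvh1
                _ ≤ C - 1 := by have := h1F_card iv; omega
            have hb2 : (K.erase (e iv) \ S iv).card ≤ C :=
              le_trans (Finset.card_le_card hT2) (h2F_card iv v (mem_S.mp hviS).2)
            have := le_trans (Finset.card_le_card hsplit) (Finset.card_union_le _ _)
            have hClb : 2 ≤ C := by omega
            omega
          · -- unconstrained case
            have hT1 : K.erase (e iv) ⊆ (S iv).erase v := by
              intro u hu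
              rcases hdich u hu with h | ⟨hD'', hadj, j, hji, hju⟩
              · exact Finset.mem_erase.mpr ⟨hT1v u h, (Finset.mem_inter.mp h).2⟩
              · exfalso
                apply hvCon
                refine Finset.mem_filter.mpr ⟨hvUA, iv, hviS, ?_⟩
                exact mem_h1F.mpr ⟨(mem_S.mp hviS).2, u, hadj, j, hji, hju⟩
            calc (K.erase (e iv)).card ≤ ((S iv).erase v).card := Finset.card_le_card hT1
              _ = (S iv).card - 1 := Finset.card_erase_of_mem hviS
              _ = d - 1 - 1 := by rw [hScard]
              _ < d - 1 := by omega
        -- pick a fresh color for v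
        have hmex : (pal iv \ F).Nonempty := by
          have hsub : pal iv ∩ F ⊆ (K.erase (e iv)).image c := by
            intro m hm
            obtain ⟨hmp, hmF⟩ := Finset.mem_inter.mp hm
            obtain ⟨u, huK, hcu⟩ := Finset.mem_image.mp hmF
            refine Finset.mem_image.mpr ⟨u, Finset.mem_erase.mpr ⟨?_, huK⟩, hcu⟩
            rintro rfl
            rw [hce iv] at hcu
            exact (mem_pal.mp hmp).1 hcu.symm
          have h1' : (pal iv ∩ F).card < d - 1 :=
            lt_of_le_of_lt (le_trans (Finset.card_le_card hsub) Finset.card_image_le) hKb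
          have h2' : pal iv \ F = pal iv \ (pal iv ∩ F) := by
            rw [Finset.sdiff_inter_self_left]
          rw [← Finset.card_pos, h2',
            Finset.card_sdiff_of_subset Finset.inter_subset_left, pal_card]
          omega
        obtain ⟨m, hm⟩ := hmex
        have hmpal : m ∈ pal iv := (Finset.mem_sdiff.mp hm).1
        have hmF : m ∉ F := (Finset.mem_sdiff.mp hm).2
        -- the new coloring
        refine ⟨Function.update c v m, ?_, ?_, ?_, ?_, ?_⟩
        · rw [Function.update_of_ne (Ne.symm hvx)]
          exact hcx
        · intro k
          rw [Function.update_of_ne (Ne.symm (hvek k))]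
          exact hce k
        · intro u hu i huS
          by_cases huv : u = v
          · subst huv
            rw [Function.update_self, hUniq huS hviS]
            exact hmpal
          · have : u ∈ D' := by
              rw [hD'eq]
              exact Finset.mem_erase.mpr ⟨huv, hu⟩
            rw [Function.update_of_ne huv]
            exact hpalc u this i huS
        · intro u hu w hw huw
          have hmemiff : ∀ {a : V}, a ∈ A0 ∪ ((UF \ A0) \ B) → a = v ∨ a ∈ A0 ∪ D' := by
            intro a ha
            rcases Finset.mem_union.mp ha with h | h
            · exact Or.inr (Finset.mem_union_left _ h)
            · by_cases hav : a = v
              · exact Or.inl hav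
              · refine Or.inr (Finset.mem_union_right _ ?_)
                rw [hD'eq]
                exact Finset.mem_erase.mpr ⟨hav, h⟩
          rcases hmemiff hu with rfl | hu'
          · rcases hmemiff hw with rfl | hw'
            · exact absurd huw (G.irrefl)
            · have hwv : w ≠ u := fun h => hvcol (h ▸ hw')
              rw [Function.update_self, Function.update_of_ne hwv]
              intro h
              apply hmF
              rw [hFdef]
              refine Finset.mem_image.mpr ⟨w, ?_, h.symm⟩
              exact Finset.mem_inter.mpr ⟨hw', Finset.mem_union_right _
                ((mem_neighborFinset _ _ _).mpr huw)⟩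
          · rcases hmemiff hw with rfl | hw'
            · have huv : u ≠ w := fun h => hvcol (h ▸ hu')
              rw [Function.update_self, Function.update_of_ne huv]
              intro h
              apply hmF
              rw [hFdef]
              refine Finset.mem_image.mpr ⟨u, ?_, h⟩
              exact Finset.mem_inter.mpr ⟨hu', Finset.mem_union_right _
                ((mem_neighborFinset _ _ _).mpr huw.symm)⟩
            · have huv : u ≠ v := fun h => hvcol (h ▸ hu')
              have hwv : w ≠ v := fun h => hvcol (h ▸ hw')
              rw [Function.update_of_ne huv, Function.update_of_ne hwv]
              refine hprop u ?_ w ?_ huw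
              · rcases Finset.mem_union.mp hu' with h | h
                · exact Finset.mem_union_left _ h
                · exact Finset.mem_union_right _ h
              · rcases Finset.mem_union.mp hw' with h | h
                · exact Finset.mem_union_left _ h
                · exact Finset.mem_union_right _ h
        · intro i u hu w hw huS hwS hcuw
          have hmemiff : ∀ {a : V}, a ∈ A0 ∪ ((UF \ A0) \ B) → a = v ∨ a ∈ A0 ∪ D' := by
            intro a ha
            rcases Finset.mem_union.mp ha with h | h
            · exact Or.inr (Finset.mem_union_left _ h)
            · by_cases hav : a = v
              · exact Or.inl hav
              · refine Or.inr (Finset.mem_union_right _ ?_)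
                rw [hD'eq]
                exact Finset.mem_erase.mpr ⟨hav, h⟩
          rcases hmemiff hu with rfl | hu'
          · rcases hmemiff hw with rfl | hw'
            · rfl
            · exfalso
              have hiiv : i = iv := hUniq huS hviS
              have hwv : w ≠ u := fun h => hvcol (h ▸ hw')
              rw [Function.update_self, Function.update_of_ne hwv] at hcuw
              apply hmF
              rw [hFdef]
              refine Finset.mem_image.mpr ⟨w, ?_, hcuw.symm⟩
              exact Finset.mem_inter.mpr ⟨hw', Finset.mem_union_left _ (hiiv ▸ hwS)⟩
          · rcases hmemiff hw with rfl | hw'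
            · exfalso
              have hiiv : i = iv := hUniq hwS hviS
              have huv : u ≠ w := fun h => hvcol (h ▸ hu')
              rw [Function.update_self, Function.update_of_ne huv] at hcuw
              apply hmF
              rw [hFdef]
              refine Finset.mem_image.mpr ⟨u, ?_, hcuw⟩
              exact Finset.mem_inter.mpr ⟨hu', Finset.mem_union_left _ (hiiv ▸ huS)⟩
            · have huv : u ≠ v := fun h => hvcol (h ▸ hu')
              have hwv : w ≠ v := fun h => hvcol (h ▸ hw')
              rw [Function.update_of_ne huv, Function.update_of_ne hwv] at hcuw
              refine hinj i u ?_ w ?_ huS hwS hcuw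
              · rcases Finset.mem_union.mp hu' with h | h
                · exact Finset.mem_union_left _ h
                · exact Finset.mem_union_right _ h
              · rcases Finset.mem_union.mp hw' with h | h
                · exact Finset.mem_union_left _ h
                · exact Finset.mem_union_right _ h
  -- apply the induction with B = ∅
  obtain ⟨c, hcx, hce, hpalc, hprop, hinj⟩ := hind ((UF \ A0).card) ∅
    (Finset.empty_subset _) (by rw [Finset.sdiff_empty])
  rw [Finset.sdiff_empty] at hpalc hprop hinj
  set A : Finset V := A0 ∪ (UF \ A0) with hAdef
  have hxA : x ∈ A := Finset.mem_union_left _ (mem_A0.mpr (Or.inl rfl))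
  have heA : ∀ k, e k ∈ A := fun k => Finset.mem_union_left _ (mem_A0.mpr (Or.inr ⟨k, rfl⟩))
  have hSA : ∀ {u : V} {i : Fin d}, u ∈ S i → u ∈ A := by
    intro u i hu
    by_cases h : u ∈ A0
    · exact Finset.mem_union_left _ h
    · exact Finset.mem_union_right _ (Finset.mem_sdiff.mpr ⟨mem_UF.mpr ⟨i, hu⟩, h⟩)
  -- extend greedily to all of V
  obtain ⟨c', hagree, hproper⟩ := greedy_ext G d (fun v => le_of_eq (hreg v))
    ((Finset.univ \ A).card) A c le_rfl hprop
  have hc'x : c' x = Fin.last d := by rw [hagree x hxA, hcx]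
  have hc'e : ∀ k, c' (e k) = Fin.castSucc k := fun k => by rw [hagree _ (heA k), hce k]
  -- each punctured neighborhood realizes the full palette
  have him : ∀ k, (S k).image c' = pal k := by
    intro k
    have hsub : (S k).image c' ⊆ pal k := by
      intro m hm
      obtain ⟨u, huS, hcu⟩ := Finset.mem_image.mp hm
      by_cases h : u ∈ A0
      · rcases mem_A0.mp h with rfl | ⟨l, rfl⟩
        · exact absurd huS (hxS k)
        · rw [hc'e l] at hcu
          refine mem_pal.mpr ⟨?_, hcu ▸ (Fin.castSucc_lt_last l).ne⟩
          rw [← hcu]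
          intro hlk
          exact (mem_S.mp huS).2.ne (congrArg e (Fin.castSucc_inj.mp hlk)).symm
      · have huD : u ∈ UF \ A0 := Finset.mem_sdiff.mpr ⟨mem_UF.mpr ⟨k, huS⟩, h⟩
        rw [hagree u (Finset.mem_union_right _ huD)] at hcu
        exact hcu ▸ hpalc u huD k huS
    have hcard : ((S k).image c').card = (pal k).card := by
      rw [pal_card, Finset.card_image_of_injOn, hScard]
      intro u hu w hw hcuw
      rw [hagree u (hSA hu), hagree w (hSA hw)] at hcuw
      exact hinj k u (hSA hu) w (hSA hw) hu hw hcuw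
    exact Finset.eq_of_subset_of_card_le hsub (le_of_eq hcard.symm)
  -- conclude: this is a b-coloring
  have hlastne : ∀ k : Fin d, (Fin.castSucc k : Fin (d+1)) ≠ Fin.last d :=
    fun k => (Fin.castSucc_lt_last k).ne
  have hcast : ∀ {j : Fin (d+1)}, j ≠ Fin.last d → ∃ k : Fin d, Fin.castSucc k = j := by
    intro j hj
    exact ⟨⟨j.1, Fin.val_lt_last hj⟩, by ext; simp⟩
  have hdomx : IsDominant G c' x := by
    intro j hj
    rw [hc'x] at hj
    obtain ⟨k, rfl⟩ := hcast hj
    exact ⟨e k, hx k, hc'e k⟩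
  have hdome : ∀ k : Fin d, IsDominant G c' (e k) := by
    intro k j hj
    rw [hc'e k] at hj
    by_cases hjl : j = Fin.last d
    · exact ⟨x, (hx k).symm, hjl ▸ hc'x⟩
    · have : j ∈ pal k := mem_pal.mpr ⟨hj, hjl⟩
      rw [← him k] at this
      obtain ⟨u, huS, hcu⟩ := Finset.mem_image.mp this
      exact ⟨u, (mem_S.mp huS).2, hcu⟩
  refine ⟨c', hproper, ?_⟩
  intro j
  by_cases hjl : j = Fin.last d
  · exact ⟨x, hjl ▸ hc'x, hdomx⟩
  · obtain ⟨k, rfl⟩ := hcast hjl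
    exact ⟨e k, hc'e k, hdome k⟩
theorem bNum_eq_of_no_C4_special_vertex (G : SimpleGraph V) [Nonempty V]
    [DecidableRel G.Adj] (d : ℕ) (hd : 7 ≤ d) (hreg : G.IsRegularOfDegree d)
    (h4 : NoCycleOfLength G 4)
    (x : V) (e : Fin d ↪ V) (hnbr : ∀ v, G.Adj x v ↔ ∃ i, e i = v)
    (h1 : ∀ i : Fin d,
      {v : V | G.Adj (e i) v ∧ ∃ w, G.Adj v w ∧ ∃ j, j ≠ i ∧ G.Adj (e j) w}.ncard ≤
        ceilHalf (d - 1) - 1)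
    (h2 : ∀ i : Fin d, ∀ v, G.Adj (e i) v →
      {w : V | G.Adj v w ∧ ∃ j, j ≠ i ∧ G.Adj (e j) w}.ncard ≤ ceilHalf (d - 1) - 1) :
    bNum G = d + 1 := by
  have hmem : d + 1 ∈ {k | ∃ c : V → Fin k, IsBColoring G c} :=
    exists_bcol G d hd hreg h4 x e hnbr h1 h2
  have hub : ∀ k ∈ {k | ∃ c : V → Fin k, IsBColoring G c}, k ≤ d + 1 :=
    fun k hk => bcol_le G d hreg k hk
  refine le_antisymm (csSup_le ⟨d + 1, hmem⟩ hub) (le_csSup ⟨d + 1, ?_⟩ hmem)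
  intro k hk
  exact hub k hk
end

section
/- Let G be a d-regular graph and let c be a proper (d+1)-coloring of G in which some color class contains no dominant vertex. Then there exists a proper d-coloring of G in which every vertex that was dominant in c remains dominant. -/
open SimpleGraph

variable {V : Type*} [Fintype V] [DecidableEq V]

theorem exists_d_coloring_preserving_dominant (G : SimpleGraph V)
    [DecidableRel G.Adj] (d : ℕ) (hreg : G.IsRegularOfDegree d)
    (c : V → Fin (d + 1)) (hc : ProperColoring G c)
    (hj : ∃ j : Fin (d + 1), ∀ v, c v = j → ¬ IsDominant G c v) :
    ∃ c' : V → Fin d, ProperColoring G c' ∧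
      ∀ v, IsDominant G c v → IsDominant G c' v := by
  classical
  obtain ⟨j, hjnd⟩ := hj
  have hchoice : ∀ v, ∃ i : Fin (d+1), i ≠ j ∧ (c v = j → ∀ u, G.Adj v u → c u ≠ i) := by
    intro v
    by_cases hv : c v = j
    · have hnd := hjnd v hv
      simp only [IsDominant, not_forall] at hnd
      obtain ⟨i, hi⟩ := hnd
      push_neg at hi
      obtain ⟨hij, hni⟩ := hi
      exact ⟨i, hv ▸ hij, fun _ u hu hcu => (hni u hu hcu)⟩
    · exact ⟨c v, hv, fun h => absurd h hv⟩
  choose f hf1 hf2 using hchoice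
  set c₁ : V → Fin (d+1) := fun v => if c v = j then f v else c v with hc₁
  have hne : ∀ v, c₁ v ≠ j := by
    intro v; simp only [hc₁]; split
    · exact hf1 v
    · assumption
  have hprop1 : ∀ u v, G.Adj u v → c₁ u ≠ c₁ v := by
    intro u v huv
    by_cases hu : c u = j <;> by_cases hv : c v = j <;>
      simp only [hc₁, hu, hv, if_pos, if_neg, if_true, if_false]
    · exact absurd (hu.trans hv.symm) (hc u v huv)
    · exact fun h => hf2 u hu v huv h.symm
    · exact fun h => hf2 v hv u huv.symm h
    · exact hc u v huv
  have hsome : ∀ v, (finSuccEquiv' j (c₁ v)).isSome := by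
    intro v
    cases h : finSuccEquiv' j (c₁ v) with
    | none =>
        exact absurd ((finSuccEquiv' j).injective (h.trans (finSuccEquiv'_at j).symm)) (hne v)
    | some _ => rfl
  refine ⟨fun v => ((finSuccEquiv' j) (c₁ v)).get (hsome v), ?_, ?_⟩
  · intro u v huv h
    dsimp only at h
    apply hprop1 u v huv
    have hu : finSuccEquiv' j (c₁ u) = some (((finSuccEquiv' j) (c₁ u)).get (hsome u)) :=
      (Option.some_get (hsome u)).symm
    have hv : finSuccEquiv' j (c₁ v) = some (((finSuccEquiv' j) (c₁ v)).get (hsome v)) :=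
      (Option.some_get (hsome v)).symm
    exact (finSuccEquiv' j).injective (hu.trans (by rw [h, ← hv]))
  · intro v hv m hm
    have hvj : c v ≠ j := fun h => hjnd v h hv
    have hcv : c₁ v = c v := if_neg hvj
    have hkey : ∀ w, finSuccEquiv' j (c₁ w) = some (((finSuccEquiv' j) (c₁ w)).get (hsome w)) :=
      fun w => (Option.some_get (hsome w)).symm
    have hi : j.succAbove m ≠ c v := by
      intro h
      apply hm
      dsimp only
      have : finSuccEquiv' j (c₁ v) = some m := by
        rw [hcv, ← h, finSuccEquiv'_succAbove]
      have := (hkey v).symm.trans this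
      exact (Option.some_injective _ this).symm
    obtain ⟨u, hu, hcu⟩ := hv (j.succAbove m) hi
    refine ⟨u, hu, ?_⟩
    dsimp only
    have huj : c u ≠ j := by rw [hcu]; exact Fin.succAbove_ne j m
    have h1 : c₁ u = j.succAbove m := by
      simp only [hc₁, if_neg huj]; exact hcu
    have : finSuccEquiv' j (c₁ u) = some m := by rw [h1, finSuccEquiv'_succAbove]
    exact Option.some_injective _ ((hkey u).symm.trans this)
end
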